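/- arXiv:1910.01338 — 3 statements merged into one kernel-verified Lean document; each statement's English description precedes it below -/
import Mathlib

section
/- Let a < b be real numbers, P ∈ ℝ^{p×m} a matrix, Q₁ : [a,b] → ℝ^{p×n} and Q₂ : [a,b] → ℝ^{q×m} continuous matrix-valued functions, and R₀ : [a,b] → ℝ^{q×n}, R₁, R₂ : [a,b]×[a,b] → ℝ^{q×n} continuous matrix-valued functions. Then the map sending (x, y) ∈ ℝ^m × L²([a,b], ℝ^n) to (P x + ∫_a^b Q₁(s) y(s) ds, s ↦ Q₂(s) x + N₀-part: R₀(s) y(s) + ∫_a^s R₁(s,θ) y(θ) dθ + ∫_s^b R₂(s,θ) y(θ) dθ) is a well-defined bounded linear operator from ℝ^m × L²([a,b], ℝ^n) to ℝ^p × L²([a,b], ℝ^q). -/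
open MeasureTheory Set

/-- Matrix–vector multiplication, viewed as a map between Euclidean spaces. -/
def mulVecE {n m : ℕ} (M : Matrix (Fin n) (Fin m) ℝ) (v : EuclideanSpace ℝ (Fin m)) :
    EuclideanSpace ℝ (Fin n) := WithLp.toLp 2 (M.mulVec v)

/-- The 3-PI operator `P_{N₀,N₁,N₂}`, applied pointwise. -/
noncomputable def threePI {n m : ℕ} (a b : ℝ)
    (N₀ : ℝ → Matrix (Fin n) (Fin m) ℝ)
    (N₁ N₂ : ℝ → ℝ → Matrix (Fin n) (Fin m) ℝ)
    (y : ℝ → EuclideanSpace ℝ (Fin m)) (s : ℝ) : EuclideanSpace ℝ (Fin n) :=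
  mulVecE (N₀ s) (y s) + (∫ θ in a..s, mulVecE (N₁ s θ) (y θ))
    + ∫ θ in s..b, mulVecE (N₂ s θ) (y θ)

/-- Finite-dimensional component of the 4-PI operator `Π[P,Q₁,Q₂,R₀,R₁,R₂]`. -/
noncomputable def fourPIfin {p n m : ℕ} (a b : ℝ)
    (P : Matrix (Fin p) (Fin m) ℝ) (Q₁ : ℝ → Matrix (Fin p) (Fin n) ℝ)
    (x : EuclideanSpace ℝ (Fin m)) (y : ℝ → EuclideanSpace ℝ (Fin n)) :
    EuclideanSpace ℝ (Fin p) :=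
  mulVecE P x + ∫ s in a..b, mulVecE (Q₁ s) (y s)

/-- Function-valued component of the 4-PI operator `Π[P,Q₁,Q₂,R₀,R₁,R₂]`. -/
noncomputable def fourPIfun {q n m : ℕ} (a b : ℝ)
    (Q₂ : ℝ → Matrix (Fin q) (Fin m) ℝ)
    (R₀ : ℝ → Matrix (Fin q) (Fin n) ℝ) (R₁ R₂ : ℝ → ℝ → Matrix (Fin q) (Fin n) ℝ)
    (x : EuclideanSpace ℝ (Fin m)) (y : ℝ → EuclideanSpace ℝ (Fin n)) (s : ℝ) :
    EuclideanSpace ℝ (Fin q) :=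
  mulVecE (Q₂ s) x + threePI a b R₀ R₁ R₂ y s

open scoped ENNReal NNReal

namespace FourPIAux

noncomputable def mCLM {k l : ℕ} (M : Matrix (Fin k) (Fin l) ℝ) :
    EuclideanSpace ℝ (Fin l) →L[ℝ] EuclideanSpace ℝ (Fin k) :=
  LinearMap.toContinuousLinearMap (Matrix.toEuclideanLin M)

lemma mCLM_apply {k l : ℕ} (M : Matrix (Fin k) (Fin l) ℝ) (v : EuclideanSpace ℝ (Fin l)) :
    mCLM M v = mulVecE M v := rfl

noncomputable def mCLML (k l : ℕ) : Matrix (Fin k) (Fin l) ℝ →ₗ[ℝ]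
    (EuclideanSpace ℝ (Fin l) →L[ℝ] EuclideanSpace ℝ (Fin k)) where
  toFun := mCLM
  map_add' M N := by ext v i; simp [mCLM, Matrix.toEuclideanLin]
  map_smul' c M := by ext v i; simp [mCLM, Matrix.toEuclideanLin]

lemma continuous_mCLM (k l : ℕ) : Continuous (mCLM (k := k) (l := l)) :=
  (mCLML k l).continuous_of_finiteDimensional

lemma norm_mCLM_apply_le {k l : ℕ} (M : Matrix (Fin k) (Fin l) ℝ) (v) :
    ‖mulVecE M v‖ ≤ ‖mCLM M‖ * ‖v‖ := by
  rw [← mCLM_apply]; exact (mCLM M).le_opNorm v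

end FourPIAux

section Helpers
variable {α : Type*} [MeasurableSpace α] {μ : Measure α}
variable {E F : Type*} [NormedAddCommGroup E] [NormedSpace ℝ E]
  [NormedAddCommGroup F] [NormedSpace ℝ F]

lemma aesm_clm_apply {Φ : α → E →L[ℝ] F} {g : α → E}
    (hΦ : AEStronglyMeasurable Φ μ) (hg : AEStronglyMeasurable g μ) :
    AEStronglyMeasurable (fun s => Φ s (g s)) μ :=
  isBoundedBilinearMap_apply.continuous.comp_aestronglyMeasurable (hΦ.prodMk hg)

lemma aesm_ite {P : α → Prop} [DecidablePred P] (hP : MeasurableSet {x | P x})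
    {f g : α → E} (hf : AEStronglyMeasurable f μ) (hg : AEStronglyMeasurable g μ) :
    AEStronglyMeasurable (fun x => if P x then f x else g x) μ := by
  have : (fun x => if P x then f x else g x)
      = fun x => {x | P x}.indicator f x + ({x | P x}ᶜ).indicator g x := by
    funext x
    by_cases hx : P x
    · simp [hx]
    · simp [hx]
  rw [this]
  exact (hf.indicator hP).add (hg.indicator hP.compl)

lemma integrable_clm_apply [IsFiniteMeasure μ] {Φ : α → E →L[ℝ] F} {C : ℝ}
    (hΦ : AEStronglyMeasurable Φ μ) (hC : ∀ᵐ s ∂μ, ‖Φ s‖ ≤ C)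
    {g : α → E} (hg : MemLp g 2 μ) :
    Integrable (fun s => Φ s (g s)) μ := by
  have hgi : Integrable g μ := hg.integrable (by norm_num)
  refine (hgi.norm.const_mul C).mono' (aesm_clm_apply hΦ hg.aestronglyMeasurable) ?_
  filter_upwards [hC] with s hs
  exact ((Φ s).le_opNorm (g s)).trans (by
    exact mul_le_mul_of_nonneg_right hs (norm_nonneg _))

lemma memLp_of_ae_bound [IsFiniteMeasure μ] {f : α → E} {C : ℝ}
    (hf : AEStronglyMeasurable f μ) (hC : ∀ᵐ s ∂μ, ‖f s‖ ≤ C) :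
    MemLp f 2 μ := by
  refine ⟨hf, lt_of_le_of_lt (eLpNorm_le_of_ae_bound hC) ?_⟩
  exact ENNReal.mul_lt_top
    (ENNReal.rpow_lt_top_of_nonneg (by norm_num) (measure_ne_top μ _)) ENNReal.ofReal_lt_top
end Helpers

lemma integral_norm_le_sqrt_mul {a b : ℝ} (hab : a ≤ b) {E : Type*} [NormedAddCommGroup E]
    (y : Lp E 2 (volume.restrict (Icc a b))) :
    ∫ s, ‖y s‖ ∂(volume.restrict (Icc a b)) ≤ Real.sqrt (b - a) * ‖y‖ := by
  have hy : AEStronglyMeasurable (⇑y) (volume.restrict (Icc a b)) :=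
    (Lp.memLp y).aestronglyMeasurable
  have h1 : eLpNorm (⇑y) 1 (volume.restrict (Icc a b)) ≤
      eLpNorm (⇑y) 2 (volume.restrict (Icc a b)) *
        ((volume.restrict (Icc a b)) Set.univ) ^ ((1:ℝ)/1 - 1/2) :=
    eLpNorm_le_eLpNorm_mul_rpow_measure_univ (by norm_num) hy
  have hμ : (volume.restrict (Icc a b)) Set.univ = ENNReal.ofReal (b - a) := by
    simp [Real.volume_Icc]
  have h2 : ∫ s, ‖y s‖ ∂(volume.restrict (Icc a b)) =
      (eLpNorm (⇑y) 1 (volume.restrict (Icc a b))).toReal := by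
    rw [eLpNorm_one_eq_lintegral_enorm, integral_norm_eq_lintegral_enorm hy]
  have h3 : ((volume.restrict (Icc a b)) Set.univ) ^ ((1:ℝ)/1 - 1/2)
      = ENNReal.ofReal (Real.sqrt (b - a)) := by
    rw [hμ, show ((1:ℝ)/1 - 1/2) = (1/2 : ℝ) by norm_num,
      ENNReal.ofReal_rpow_of_nonneg (by linarith) (by norm_num : (0:ℝ) ≤ 1/2),
      Real.sqrt_eq_rpow]
  rw [h2, Lp.norm_def]
  calc (eLpNorm (⇑y) 1 (volume.restrict (Icc a b))).toReal
      ≤ (eLpNorm (⇑y) 2 (volume.restrict (Icc a b)) *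
          ENNReal.ofReal (Real.sqrt (b - a))).toReal := by
        refine ENNReal.toReal_mono ?_ (h1.trans_eq (by rw [h3]))
        exact ENNReal.mul_ne_top (Lp.eLpNorm_ne_top y) ENNReal.ofReal_ne_top
    _ = Real.sqrt (b - a) * (eLpNorm (⇑y) 2 (volume.restrict (Icc a b))).toReal := by
        rw [ENNReal.toReal_mul, ENNReal.toReal_ofReal (Real.sqrt_nonneg _)]; ring

section Ops
variable {p q n m : ℕ} {a b : ℝ}
open FourPIAux

lemma toReal_eLpNorm_le {α : Type*} [MeasurableSpace α] {μ : Measure α}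
    {E F : Type*} [NormedAddCommGroup E] [NormedSpace ℝ E] [NormedAddCommGroup F]
    {f : α → F} {Y : Lp E 2 μ} {c : ℝ} (hc : 0 ≤ c)
    (h : ∀ᵐ s ∂μ, ‖f s‖ ≤ c * ‖Y s‖) : (eLpNorm f 2 μ).toReal ≤ c * ‖Y‖ := by
  have h1 : eLpNorm f 2 μ ≤ eLpNorm (c • (⇑Y : α → E)) 2 μ := by
    refine eLpNorm_mono_ae ?_
    filter_upwards [h] with s hs
    rw [Pi.smul_apply, norm_smul, Real.norm_eq_abs, abs_of_nonneg hc]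
    exact hs
  have h2 : eLpNorm (c • (⇑Y : α → E)) 2 μ = (‖c‖₊ : ℝ≥0∞) * eLpNorm (⇑Y) 2 μ := by
    rw [eLpNorm_const_smul]
    rfl
  calc (eLpNorm f 2 μ).toReal
      ≤ ((‖c‖₊ : ℝ≥0∞) * eLpNorm (⇑Y) 2 μ).toReal := by
        refine ENNReal.toReal_mono ?_ (h1.trans_eq h2)
        exact ENNReal.mul_ne_top ENNReal.coe_ne_top (Lp.eLpNorm_ne_top Y)
    _ = c * ‖Y‖ := by
        rw [ENNReal.toReal_mul, Lp.norm_def, ENNReal.coe_toReal, coe_nnnorm,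
          Real.norm_eq_abs, abs_of_nonneg hc]

lemma exists_QI (hab : a < b) (Q₁ : ℝ → Matrix (Fin p) (Fin n) ℝ)
    (hQ₁ : ContinuousOn Q₁ (Icc a b)) :
    ∃ A : Lp (EuclideanSpace ℝ (Fin n)) 2 (volume.restrict (Icc a b)) →L[ℝ]
        EuclideanSpace ℝ (Fin p),
      ∀ y, A y = ∫ s, mulVecE (Q₁ s) (y s) ∂(volume.restrict (Icc a b)) := by
  obtain ⟨C, hCb⟩ := isCompact_Icc.exists_bound_of_continuousOn
    ((continuous_mCLM p n).comp_continuousOn hQ₁)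
  have hΦ : AEStronglyMeasurable (fun s => mCLM (Q₁ s)) (volume.restrict (Icc a b)) :=
    ((continuous_mCLM p n).comp_continuousOn hQ₁).aestronglyMeasurable measurableSet_Icc
  have hC : ∀ᵐ s ∂(volume.restrict (Icc a b)), ‖mCLM (Q₁ s)‖ ≤ max C 0 := by
    filter_upwards [ae_restrict_mem measurableSet_Icc] with s hs
    exact (hCb s hs).trans (le_max_left _ _)
  refine ⟨LinearMap.mkContinuous
    { toFun := fun y => ∫ s, mCLM (Q₁ s) (y s) ∂(volume.restrict (Icc a b))
      map_add' := fun y y' => by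
        rw [← integral_add (integrable_clm_apply hΦ hC (Lp.memLp y))
          (integrable_clm_apply hΦ hC (Lp.memLp y'))]
        refine integral_congr_ae ?_
        filter_upwards [Lp.coeFn_add y y'] with s hs
        rw [hs, Pi.add_apply, map_add]
      map_smul' := fun c y => by
        rw [RingHom.id_apply, ← integral_smul]
        refine integral_congr_ae ?_
        filter_upwards [Lp.coeFn_smul c y] with s hs
        rw [hs, Pi.smul_apply]
        exact ContinuousLinearMap.map_smul _ _ _ }
    (max C 0 * Real.sqrt (b - a)) (fun y => ?_), fun y => rfl⟩
  have hint := integrable_clm_apply hΦ hC (Lp.memLp y)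
  calc ‖∫ s, mCLM (Q₁ s) (y s) ∂(volume.restrict (Icc a b))‖
      ≤ ∫ s, ‖mCLM (Q₁ s) (y s)‖ ∂(volume.restrict (Icc a b)) :=
        norm_integral_le_integral_norm _
    _ ≤ ∫ s, max C 0 * ‖y s‖ ∂(volume.restrict (Icc a b)) := by
        refine integral_mono_ae hint.norm
          (((Lp.memLp y).integrable (by norm_num)).norm.const_mul _) ?_
        filter_upwards [hC] with s hs
        exact ((mCLM (Q₁ s)).le_opNorm (y s)).trans
          (mul_le_mul_of_nonneg_right hs (norm_nonneg _))
    _ = max C 0 * ∫ s, ‖y s‖ ∂(volume.restrict (Icc a b)) := integral_const_mul _ _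
    _ ≤ max C 0 * (Real.sqrt (b - a) * ‖y‖) := by
        refine mul_le_mul_of_nonneg_left (integral_norm_le_sqrt_mul hab.le y)
          (le_max_right _ _)
    _ = max C 0 * Real.sqrt (b - a) * ‖y‖ := by ring

lemma exists_QII (hab : a < b) (Q₂ : ℝ → Matrix (Fin q) (Fin m) ℝ)
    (hQ₂ : ContinuousOn Q₂ (Icc a b)) :
    ∃ B : EuclideanSpace ℝ (Fin m) →L[ℝ]
        Lp (EuclideanSpace ℝ (Fin q)) 2 (volume.restrict (Icc a b)),
      ∀ x, ⇑(B x) =ᵐ[volume.restrict (Icc a b)] fun s => mulVecE (Q₂ s) x := by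
  obtain ⟨C, hCb⟩ := isCompact_Icc.exists_bound_of_continuousOn
    ((continuous_mCLM q m).comp_continuousOn hQ₂)
  have hΦ : AEStronglyMeasurable (fun s => mCLM (Q₂ s)) (volume.restrict (Icc a b)) :=
    ((continuous_mCLM q m).comp_continuousOn hQ₂).aestronglyMeasurable measurableSet_Icc
  have hmem : ∀ x : EuclideanSpace ℝ (Fin m),
      MemLp (fun s => mCLM (Q₂ s) x) 2 (volume.restrict (Icc a b)) := by
    intro x
    refine memLp_of_ae_bound (aesm_clm_apply hΦ aestronglyMeasurable_const)
      (C := max C 0 * ‖x‖) ?_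
    filter_upwards [ae_restrict_mem measurableSet_Icc] with s hs
    exact ((mCLM (Q₂ s)).le_opNorm x).trans
      (mul_le_mul_of_nonneg_right ((hCb s hs).trans (le_max_left _ _)) (norm_nonneg _))
  refine ⟨LinearMap.toContinuousLinearMap
    { toFun := fun x => (hmem x).toLp _
      map_add' := fun x x' => by
        refine Lp.ext ?_
        filter_upwards [(hmem (x + x')).coeFn_toLp,
          Lp.coeFn_add ((hmem x).toLp _) ((hmem x').toLp _),
          (hmem x).coeFn_toLp, (hmem x').coeFn_toLp] with s h1 h2 h3 h4
        rw [h1, h2, Pi.add_apply, h3, h4, map_add]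
      map_smul' := fun c x => by
        simp only [RingHom.id_apply]
        refine Lp.ext ?_
        filter_upwards [(hmem (c • x)).coeFn_toLp,
          Lp.coeFn_smul c ((hmem x).toLp _), (hmem x).coeFn_toLp] with s h1 h2 h3
        rw [h1, h2, Pi.smul_apply, h3]
        exact ContinuousLinearMap.map_smul _ _ _ },
    fun x => (hmem x).coeFn_toLp⟩

lemma exists_R0 (R₀ : ℝ → Matrix (Fin q) (Fin n) ℝ) (hR₀ : ContinuousOn R₀ (Icc a b)) :
    ∃ B : Lp (EuclideanSpace ℝ (Fin n)) 2 (volume.restrict (Icc a b)) →L[ℝ]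
        Lp (EuclideanSpace ℝ (Fin q)) 2 (volume.restrict (Icc a b)),
      ∀ y, ⇑(B y) =ᵐ[volume.restrict (Icc a b)] fun s => mulVecE (R₀ s) (y s) := by
  obtain ⟨C, hCb⟩ := isCompact_Icc.exists_bound_of_continuousOn
    ((continuous_mCLM q n).comp_continuousOn hR₀)
  have hΦ : AEStronglyMeasurable (fun s => mCLM (R₀ s)) (volume.restrict (Icc a b)) :=
    ((continuous_mCLM q n).comp_continuousOn hR₀).aestronglyMeasurable measurableSet_Icc
  have hb : ∀ y : Lp (EuclideanSpace ℝ (Fin n)) 2 (volume.restrict (Icc a b)),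
      ∀ᵐ s ∂(volume.restrict (Icc a b)), ‖mCLM (R₀ s) (y s)‖ ≤ max C 0 * ‖y s‖ := by
    intro y
    filter_upwards [ae_restrict_mem measurableSet_Icc] with s hs
    exact ((mCLM (R₀ s)).le_opNorm (y s)).trans
      (mul_le_mul_of_nonneg_right ((hCb s hs).trans (le_max_left _ _)) (norm_nonneg _))
  have hmem : ∀ y : Lp (EuclideanSpace ℝ (Fin n)) 2 (volume.restrict (Icc a b)),
      MemLp (fun s => mCLM (R₀ s) (y s)) 2 (volume.restrict (Icc a b)) := by
    intro y
    refine MemLp.of_le ((Lp.memLp y).const_smul (max C 0))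
      (aesm_clm_apply hΦ (Lp.memLp y).aestronglyMeasurable) ?_
    filter_upwards [hb y] with s hs
    refine hs.trans (le_of_eq ?_)
    rw [Pi.smul_apply, norm_smul, Real.norm_eq_abs, abs_of_nonneg (le_max_right C 0)]
  refine ⟨LinearMap.mkContinuous
    { toFun := fun y => (hmem y).toLp _
      map_add' := fun y y' => by
        refine Lp.ext ?_
        filter_upwards [(hmem (y + y')).coeFn_toLp,
          Lp.coeFn_add ((hmem y).toLp _) ((hmem y').toLp _),
          (hmem y).coeFn_toLp, (hmem y').coeFn_toLp, Lp.coeFn_add y y']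
          with s h1 h2 h3 h4 h5
        rw [h1, h2, Pi.add_apply, h3, h4, h5, Pi.add_apply, map_add]
      map_smul' := fun c y => by
        simp only [RingHom.id_apply]
        refine Lp.ext ?_
        filter_upwards [(hmem (c • y)).coeFn_toLp,
          Lp.coeFn_smul c ((hmem y).toLp _), (hmem y).coeFn_toLp, Lp.coeFn_smul c y]
          with s h1 h2 h3 h4
        rw [h1, h2, Pi.smul_apply, h3, h4, Pi.smul_apply]
        exact ContinuousLinearMap.map_smul _ _ _ }
    (max C 0) (fun y => ?_), fun y => (hmem y).coeFn_toLp⟩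
  simp only [LinearMap.coe_mk, AddHom.coe_mk]
  rw [Lp.norm_toLp]
  exact toReal_eLpNorm_le (le_max_right C 0) (hb y)

lemma exists_ker (hab : a < b) (R₁ R₂ : ℝ → ℝ → Matrix (Fin q) (Fin n) ℝ)
    (hR₁ : ContinuousOn (fun z : ℝ × ℝ => R₁ z.1 z.2) (Icc a b ×ˢ Icc a b))
    (hR₂ : ContinuousOn (fun z : ℝ × ℝ => R₂ z.1 z.2) (Icc a b ×ˢ Icc a b)) :
    ∃ B : Lp (EuclideanSpace ℝ (Fin n)) 2 (volume.restrict (Icc a b)) →L[ℝ]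
        Lp (EuclideanSpace ℝ (Fin q)) 2 (volume.restrict (Icc a b)),
      ∀ y, (∀ s ∈ Icc a b, Integrable
          (fun θ => mCLM (if θ ≤ s then R₁ s θ else R₂ s θ) (y θ)) (volume.restrict (Icc a b))) ∧
        ⇑(B y) =ᵐ[volume.restrict (Icc a b)]
          fun s => ∫ θ, mCLM (if θ ≤ s then R₁ s θ else R₂ s θ) (y θ)
            ∂(volume.restrict (Icc a b)) := by
  obtain ⟨C₁, hC₁⟩ := (isCompact_Icc.prod isCompact_Icc).exists_bound_of_continuousOn
    ((continuous_mCLM q n).comp_continuousOn hR₁)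
  obtain ⟨C₂, hC₂⟩ := (isCompact_Icc.prod isCompact_Icc).exists_bound_of_continuousOn
    ((continuous_mCLM q n).comp_continuousOn hR₂)
  set C' := max (max C₁ C₂) 0 with hC'def
  have hC'0 : 0 ≤ C' := le_max_right _ _
  have hK : ∀ s ∈ Icc a b, ∀ θ ∈ Icc a b,
      ‖mCLM (if θ ≤ s then R₁ s θ else R₂ s θ)‖ ≤ C' := by
    intro s hs θ hθ
    by_cases h : θ ≤ s
    · simp only [h, if_true]
      exact (hC₁ (s, θ) (mk_mem_prod hs hθ)).trans ((le_max_left _ _).trans (le_max_left _ _))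
    · simp only [h, if_false]
      exact (hC₂ (s, θ) (mk_mem_prod hs hθ)).trans ((le_max_right _ _).trans (le_max_left _ _))
  have hΦs : ∀ s ∈ Icc a b, AEStronglyMeasurable
      (fun θ => mCLM (if θ ≤ s then R₁ s θ else R₂ s θ)) (volume.restrict (Icc a b)) := by
    intro s hs
    have c1 : ContinuousOn (fun θ => mCLM (R₁ s θ)) (Icc a b) :=
      (continuous_mCLM q n).comp_continuousOn
        (hR₁.comp (Continuous.continuousOn (continuous_const.prodMk continuous_id))
          (fun θ hθ => mk_mem_prod hs hθ))
    have c2 : ContinuousOn (fun θ => mCLM (R₂ s θ)) (Icc a b) :=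
      (continuous_mCLM q n).comp_continuousOn
        (hR₂.comp (Continuous.continuousOn (continuous_const.prodMk continuous_id))
          (fun θ hθ => mk_mem_prod hs hθ))
    have heq : (fun θ => mCLM (if θ ≤ s then R₁ s θ else R₂ s θ))
        = fun θ => if θ ≤ s then mCLM (R₁ s θ) else mCLM (R₂ s θ) :=
      funext fun θ => apply_ite mCLM _ _ _
    rw [heq]
    exact aesm_ite (P := fun θ => θ ≤ s) (measurableSet_Iic)
      (c1.aestronglyMeasurable measurableSet_Icc) (c2.aestronglyMeasurable measurableSet_Icc)
  have hint : ∀ (y : Lp (EuclideanSpace ℝ (Fin n)) 2 (volume.restrict (Icc a b))),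
      ∀ s ∈ Icc a b, Integrable
        (fun θ => mCLM (if θ ≤ s then R₁ s θ else R₂ s θ) (y θ)) (volume.restrict (Icc a b)) := by
    intro y s hs
    refine integrable_clm_apply (hΦs s hs) (C := C') ?_ (Lp.memLp y)
    filter_upwards [ae_restrict_mem measurableSet_Icc] with θ hθ
    exact hK s hs θ hθ
  have hgaesm : ∀ y : Lp (EuclideanSpace ℝ (Fin n)) 2 (volume.restrict (Icc a b)),
      AEStronglyMeasurable (fun s => ∫ θ, mCLM (if θ ≤ s then R₁ s θ else R₂ s θ) (y θ)
        ∂(volume.restrict (Icc a b))) (volume.restrict (Icc a b)) := by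
    intro y
    have hprod1 : AEStronglyMeasurable (fun z : ℝ × ℝ => mCLM (R₁ z.1 z.2))
        ((volume.restrict (Icc a b)).prod (volume.restrict (Icc a b))) := by
      rw [Measure.prod_restrict]
      exact ((continuous_mCLM q n).comp_continuousOn hR₁).aestronglyMeasurable
        (measurableSet_Icc.prod measurableSet_Icc)
    have hprod2 : AEStronglyMeasurable (fun z : ℝ × ℝ => mCLM (R₂ z.1 z.2))
        ((volume.restrict (Icc a b)).prod (volume.restrict (Icc a b))) := by
      rw [Measure.prod_restrict]
      exact ((continuous_mCLM q n).comp_continuousOn hR₂).aestronglyMeasurable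
        (measurableSet_Icc.prod measurableSet_Icc)
    have hyprod : AEStronglyMeasurable (fun z : ℝ × ℝ => (y z.2 : EuclideanSpace ℝ (Fin n)))
        ((volume.restrict (Icc a b)).prod (volume.restrict (Icc a b))) :=
      (Lp.memLp y).aestronglyMeasurable.comp_quasiMeasurePreserving
        Measure.quasiMeasurePreserving_snd
    have hF : AEStronglyMeasurable
        (fun z : ℝ × ℝ => mCLM (if z.2 ≤ z.1 then R₁ z.1 z.2 else R₂ z.1 z.2) (y z.2))
        ((volume.restrict (Icc a b)).prod (volume.restrict (Icc a b))) := by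
      have heq : (fun z : ℝ × ℝ => mCLM (if z.2 ≤ z.1 then R₁ z.1 z.2 else R₂ z.1 z.2) (y z.2))
          = fun z : ℝ × ℝ =>
            (if z.2 ≤ z.1 then mCLM (R₁ z.1 z.2) else mCLM (R₂ z.1 z.2)) (y z.2) := by
        funext z
        by_cases h : z.2 ≤ z.1 <;> simp [h]
      rw [heq]
      exact aesm_clm_apply (aesm_ite (P := fun z : ℝ × ℝ => z.2 ≤ z.1)
        (measurableSet_le measurable_snd measurable_fst) hprod1 hprod2) hyprod
    exact hF.integral_prod_right'
  have hbound : ∀ y : Lp (EuclideanSpace ℝ (Fin n)) 2 (volume.restrict (Icc a b)),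
      ∀ᵐ s ∂(volume.restrict (Icc a b)),
        ‖∫ θ, mCLM (if θ ≤ s then R₁ s θ else R₂ s θ) (y θ) ∂(volume.restrict (Icc a b))‖
          ≤ C' * Real.sqrt (b - a) * ‖y‖ := by
    intro y
    filter_upwards [ae_restrict_mem measurableSet_Icc] with s hs
    calc ‖∫ θ, mCLM (if θ ≤ s then R₁ s θ else R₂ s θ) (y θ) ∂(volume.restrict (Icc a b))‖
        ≤ ∫ θ, ‖mCLM (if θ ≤ s then R₁ s θ else R₂ s θ) (y θ)‖ ∂(volume.restrict (Icc a b)) :=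
          norm_integral_le_integral_norm _
      _ ≤ ∫ θ, C' * ‖y θ‖ ∂(volume.restrict (Icc a b)) := by
          refine integral_mono_ae (hint y s hs).norm
            (((Lp.memLp y).integrable (by norm_num)).norm.const_mul _) ?_
          filter_upwards [ae_restrict_mem measurableSet_Icc] with θ hθ
          exact ((mCLM _).le_opNorm _).trans
            (mul_le_mul_of_nonneg_right (hK s hs θ hθ) (norm_nonneg _))
      _ = C' * ∫ θ, ‖y θ‖ ∂(volume.restrict (Icc a b)) := integral_const_mul _ _
      _ ≤ C' * (Real.sqrt (b - a) * ‖y‖) :=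
          mul_le_mul_of_nonneg_left (integral_norm_le_sqrt_mul hab.le y) hC'0
      _ = C' * Real.sqrt (b - a) * ‖y‖ := by ring
  have hmem : ∀ y : Lp (EuclideanSpace ℝ (Fin n)) 2 (volume.restrict (Icc a b)),
      MemLp (fun s => ∫ θ, mCLM (if θ ≤ s then R₁ s θ else R₂ s θ) (y θ)
        ∂(volume.restrict (Icc a b))) 2 (volume.restrict (Icc a b)) :=
    fun y => memLp_of_ae_bound (hgaesm y) (hbound y)
  have hμu : ((volume.restrict (Icc a b)) univ) ^ (((2:ℝ≥0∞).toReal)⁻¹)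
      = ENNReal.ofReal (Real.sqrt (b - a)) := by
    rw [Measure.restrict_apply_univ, Real.volume_Icc,
      show (((2:ℝ≥0∞).toReal)⁻¹ : ℝ) = (1/2 : ℝ) by norm_num,
      ENNReal.ofReal_rpow_of_nonneg (by linarith) (by norm_num : (0:ℝ) ≤ 1/2),
      Real.sqrt_eq_rpow]
  refine ⟨LinearMap.mkContinuous
    { toFun := fun y => (hmem y).toLp _
      map_add' := fun y y' => by
        refine Lp.ext ?_
        filter_upwards [(hmem (y + y')).coeFn_toLp,
          Lp.coeFn_add ((hmem y).toLp _) ((hmem y').toLp _),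
          (hmem y).coeFn_toLp, (hmem y').coeFn_toLp, ae_restrict_mem measurableSet_Icc]
          with s h1 h2 h3 h4 hs
        rw [h1, h2, Pi.add_apply, h3, h4, ← integral_add (hint y s hs) (hint y' s hs)]
        refine integral_congr_ae ?_
        filter_upwards [Lp.coeFn_add y y'] with θ hθ
        rw [hθ, Pi.add_apply, map_add]
      map_smul' := fun c y => by
        simp only [RingHom.id_apply]
        refine Lp.ext ?_
        filter_upwards [(hmem (c • y)).coeFn_toLp,
          Lp.coeFn_smul c ((hmem y).toLp _), (hmem y).coeFn_toLp]
          with s h1 h2 h3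
        rw [h1, h2, Pi.smul_apply, h3, ← integral_smul]
        refine integral_congr_ae ?_
        filter_upwards [Lp.coeFn_smul c y] with θ hθ
        rw [hθ, Pi.smul_apply]
        exact ContinuousLinearMap.map_smul _ _ _ }
    (Real.sqrt (b - a) * (C' * Real.sqrt (b - a))) (fun y => ?_),
    fun y => ⟨hint y, (hmem y).coeFn_toLp⟩⟩
  simp only [LinearMap.coe_mk, AddHom.coe_mk]
  rw [Lp.norm_toLp]
  have h1 := eLpNorm_le_of_ae_bound (p := 2) (hbound y)
  rw [hμu] at h1
  calc (eLpNorm _ 2 (volume.restrict (Icc a b))).toReal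
      ≤ (ENNReal.ofReal (Real.sqrt (b - a))
          * ENNReal.ofReal (C' * Real.sqrt (b - a) * ‖y‖)).toReal := by
        refine ENNReal.toReal_mono ?_ h1
        exact ENNReal.mul_ne_top ENNReal.ofReal_ne_top ENNReal.ofReal_ne_top
    _ = Real.sqrt (b - a) * (C' * Real.sqrt (b - a) * ‖y‖) := by
        rw [ENNReal.toReal_mul, ENNReal.toReal_ofReal (Real.sqrt_nonneg _),
          ENNReal.toReal_ofReal]
        positivity
    _ = Real.sqrt (b - a) * (C' * Real.sqrt (b - a)) * ‖y‖ := by ring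

lemma ker_split {q n : ℕ} {a b : ℝ} (R₁ R₂ : ℝ → ℝ → Matrix (Fin q) (Fin n) ℝ)
    (y : ℝ → EuclideanSpace ℝ (Fin n)) (s : ℝ) (hs : s ∈ Icc a b)
    (hint : Integrable (fun θ => mCLM (if θ ≤ s then R₁ s θ else R₂ s θ) (y θ))
      (volume.restrict (Icc a b))) :
    ∫ θ, mCLM (if θ ≤ s then R₁ s θ else R₂ s θ) (y θ) ∂(volume.restrict (Icc a b))
      = (∫ θ in a..s, mulVecE (R₁ s θ) (y θ)) + ∫ θ in s..b, mulVecE (R₂ s θ) (y θ) := by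
  rw [← integral_add_compl (measurableSet_Iic (a := s)) hint]
  congr 1
  · rw [Measure.restrict_restrict measurableSet_Iic]
    have hset : Iic s ∩ Icc a b = Icc a s := by
      refine Set.ext fun θ => ?_
      simp only [mem_inter_iff, mem_Iic, mem_Icc]
      constructor
      · rintro ⟨h1, h2, h3⟩; exact ⟨h2, h1⟩
      · rintro ⟨h1, h2⟩; exact ⟨h2, h1, h2.trans hs.2⟩
    rw [hset, setIntegral_congr_fun measurableSet_Icc
      (fun θ hθ => by rw [if_pos hθ.2] : EqOn _ (fun θ => mCLM (R₁ s θ) (y θ)) (Icc a s)),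
      integral_Icc_eq_integral_Ioc, ← intervalIntegral.integral_of_le hs.1]
    rfl
  · rw [compl_Iic, Measure.restrict_restrict measurableSet_Ioi]
    have hset : Ioi s ∩ Icc a b = Ioc s b := by
      refine Set.ext fun θ => ?_
      simp only [mem_inter_iff, mem_Ioi, mem_Icc, mem_Ioc]
      constructor
      · rintro ⟨h1, h2, h3⟩; exact ⟨h1, h3⟩
      · rintro ⟨h1, h2⟩; exact ⟨h1, hs.1.trans h1.le, h2⟩
    rw [hset, setIntegral_congr_fun measurableSet_Ioc
      (fun θ hθ => by rw [if_neg (not_le.mpr hθ.1)] : EqOn _ (fun θ => mCLM (R₂ s θ) (y θ)) (Ioc s b)),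
      ← intervalIntegral.integral_of_le hs.2]
    rfl

end Ops


open FourPIAux

/-- A 4-PI operator with continuous matrix-valued parameters is a well-defined bounded
linear operator from `ℝ^m × L²([a,b], ℝ^n)` to `ℝ^p × L²([a,b], ℝ^q)`, where the product
spaces carry the `ℝ × L²` (Hilbert) norm, i.e. the `WithLp 2` product norm. -/
theorem fourPI_bounded {p q n m : ℕ} {a b : ℝ} (hab : a < b)
    (P : Matrix (Fin p) (Fin m) ℝ)
    (Q₁ : ℝ → Matrix (Fin p) (Fin n) ℝ)
    (Q₂ : ℝ → Matrix (Fin q) (Fin m) ℝ)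
    (R₀ : ℝ → Matrix (Fin q) (Fin n) ℝ)
    (R₁ R₂ : ℝ → ℝ → Matrix (Fin q) (Fin n) ℝ)
    (hQ₁ : ContinuousOn Q₁ (Icc a b))
    (hQ₂ : ContinuousOn Q₂ (Icc a b))
    (hR₀ : ContinuousOn R₀ (Icc a b))
    (hR₁ : ContinuousOn (fun z : ℝ × ℝ => R₁ z.1 z.2) (Icc a b ×ˢ Icc a b))
    (hR₂ : ContinuousOn (fun z : ℝ × ℝ => R₂ z.1 z.2) (Icc a b ×ˢ Icc a b)) :
    ∃ T : WithLp 2 (EuclideanSpace ℝ (Fin m) ×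
            Lp (EuclideanSpace ℝ (Fin n)) 2 (volume.restrict (Icc a b))) →L[ℝ]
          WithLp 2 (EuclideanSpace ℝ (Fin p) ×
            Lp (EuclideanSpace ℝ (Fin q)) 2 (volume.restrict (Icc a b))),
      ∀ x y,
        (WithLp.equiv 2 _ (T ((WithLp.equiv 2 _).symm (x, y)))).1
            = fourPIfin a b P Q₁ x (⇑y) ∧
        ∀ᵐ s ∂(volume.restrict (Icc a b)),
          (WithLp.equiv 2 _ (T ((WithLp.equiv 2 _).symm (x, y)))).2 s
            = fourPIfun a b Q₂ R₀ R₁ R₂ x (⇑y) s := by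
  classical
  obtain ⟨A2, hA2⟩ := exists_QI hab Q₁ hQ₁
  obtain ⟨B1, hB1⟩ := exists_QII hab Q₂ hQ₂
  obtain ⟨B2, hB2⟩ := exists_R0 R₀ hR₀
  obtain ⟨B3, hB3⟩ := exists_ker hab R₁ R₂ hR₁ hR₂
  refine ⟨((WithLp.prodContinuousLinearEquiv 2 ℝ (EuclideanSpace ℝ (Fin p))
      (Lp (EuclideanSpace ℝ (Fin q)) 2
        (volume.restrict (Icc a b)))).symm.toContinuousLinearMap).comp
    ((((mCLM P).comp (ContinuousLinearMap.fst ℝ _ _)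
        + A2.comp (ContinuousLinearMap.snd ℝ _ _)).prod
      (B1.comp (ContinuousLinearMap.fst ℝ _ _) + B2.comp (ContinuousLinearMap.snd ℝ _ _)
        + B3.comp (ContinuousLinearMap.snd ℝ _ _))).comp
      (WithLp.prodContinuousLinearEquiv 2 ℝ _ _).toContinuousLinearMap), fun x y => ?_⟩
  constructor
  · show mCLM P x + A2 y = fourPIfin a b P Q₁ x ⇑y
    rw [hA2]
    simp only [fourPIfin]
    congr 1
    rw [intervalIntegral.integral_of_le hab.le, ← integral_Icc_eq_integral_Ioc]
  · show ∀ᵐ s ∂(volume.restrict (Icc a b)),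
      (⇑(B1 x + B2 y + B3 y) : ℝ → EuclideanSpace ℝ (Fin q)) s
        = fourPIfun a b Q₂ R₀ R₁ R₂ x (⇑y) s
    filter_upwards [Lp.coeFn_add (B1 x + B2 y) (B3 y), Lp.coeFn_add (B1 x) (B2 y),
      hB1 x, hB2 y, (hB3 y).2, ae_restrict_mem measurableSet_Icc] with s h1 h2 h3 h4 h5 hs
    rw [h1, Pi.add_apply, h2, Pi.add_apply, h3, h4, h5,
      ker_split R₁ R₂ (⇑y) s hs ((hB3 y).1 s hs)]
    simp only [fourPIfun, threePI]
    abel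
end

section
/- Let a < b and let C₀ : [a,b] → ℝ^{p×n}, C₁, C₂ : [a,b]² → ℝ^{p×n} and R₀ : [a,b] → ℝ^{n×m}, R₁, R₂ : [a,b]² → ℝ^{n×m} be continuous matrix-valued functions. Then for every y ∈ L²([a,b], ℝ^m) and almost every s ∈ [a,b], (P_{C₀,C₁,C₂}(P_{R₀,R₁,R₂} y))(s) = (P_{R̂₀,R̂₁,R̂₂} y)(s), where R̂₀(s) = C₀(s)R₀(s), R̂₁(s,η) = C₀(s)R₁(s,η) + C₁(s,η)R₀(η) + ∫_a^η C₁(s,θ)R₂(θ,η)dθ + ∫_η^s C₁(s,θ)R₁(θ,η)dθ + ∫_s^b C₂(s,θ)R₁(θ,η)dθ, and R̂₂(s,η) = C₀(s)R₂(s,η) + C₂(s,η)R₀(η) + ∫_a^s C₁(s,θ)R₂(θ,η)dθ + ∫_s^η C₂(s,θ)R₂(θ,η)dθ + ∫_η^b C₂(s,θ)R₁(θ,η)dθ. In particular, the composition of two 3-PI operators is a 3-PI operator. -/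
open MeasureTheory Set

noncomputable local instance {k l : ℕ} : NormedAddCommGroup (Matrix (Fin k) (Fin l) ℝ) :=
  Matrix.normedAddCommGroup

noncomputable local instance {k l : ℕ} : NormedSpace ℝ (Matrix (Fin k) (Fin l) ℝ) :=
  Matrix.normedSpace

section AuxTop

noncomputable local instance matTopOfNorm {k l : ℕ} : TopologicalSpace (Matrix (Fin k) (Fin l) ℝ) :=
  @UniformSpace.toTopologicalSpace _ PseudoMetricSpace.toUniformSpace

/-! ### Auxiliary material -/

noncomputable def mvCLM (n m : ℕ) : Matrix (Fin n) (Fin m) ℝ →L[ℝ]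
    (EuclideanSpace ℝ (Fin m) →L[ℝ] EuclideanSpace ℝ (Fin n)) :=
  LinearMap.toContinuousLinearMap
  { toFun := fun M => LinearMap.toContinuousLinearMap
      { toFun := fun v => mulVecE M v
        map_add' := fun u v => by
          simp only [mulVecE, WithLp.ofLp_add, Matrix.mulVec_add, WithLp.toLp_add]
        map_smul' := fun c v => by
          simp only [mulVecE, WithLp.ofLp_smul, Matrix.mulVec_smul, WithLp.toLp_smul,
            RingHom.id_apply] }
    map_add' := fun A B => by
      ext v i
      show (A + B).mulVec v i = (A.mulVec v + B.mulVec v) i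
      rw [Matrix.add_mulVec]
    map_smul' := fun c A => by
      ext v i
      show (c • A).mulVec v i = (c • A.mulVec v) i
      rw [Matrix.smul_mulVec] }

lemma mulVecE_eq {n m : ℕ} (M : Matrix (Fin n) (Fin m) ℝ) (v : EuclideanSpace ℝ (Fin m)) :
    mulVecE M v = mvCLM n m M v := rfl

lemma mulVecE_mul {p n m : ℕ} (A : Matrix (Fin p) (Fin n) ℝ) (B : Matrix (Fin n) (Fin m) ℝ)
    (v : EuclideanSpace ℝ (Fin m)) : mulVecE (A * B) v = mulVecE A (mulVecE B v) :=
  congrArg (WithLp.toLp 2) (Matrix.mulVec_mulVec v.ofLp A B).symm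

lemma mulVecE_add_left {n m : ℕ} (A B : Matrix (Fin n) (Fin m) ℝ) (v : EuclideanSpace ℝ (Fin m)) :
    mulVecE (A + B) v = mulVecE A v + mulVecE B v := by
  rw [mulVecE_eq, map_add]; rfl

lemma mulVecE_add_right {n m : ℕ} (A : Matrix (Fin n) (Fin m) ℝ) (u v : EuclideanSpace ℝ (Fin m)) :
    mulVecE A (u + v) = mulVecE A u + mulVecE A v := by
  rw [mulVecE_eq, map_add]; rfl

/-- pull a constant matrix out of an interval integral -/
lemma mulVecE_intervalIntegral {n m : ℕ} (M : Matrix (Fin n) (Fin m) ℝ)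
    {f : ℝ → EuclideanSpace ℝ (Fin m)} {c d : ℝ} (hf : IntervalIntegrable f volume c d) :
    mulVecE M (∫ x in c..d, f x) = ∫ x in c..d, mulVecE M (f x) := by
  simp only [mulVecE_eq]
  exact ((mvCLM n m M).intervalIntegral_comp_comm hf).symm

/-- pull a matrix-valued interval integral out, applied to a fixed vector -/
lemma intervalIntegral_mulVecE {n m : ℕ} {K : ℝ → Matrix (Fin n) (Fin m) ℝ}
    (v : EuclideanSpace ℝ (Fin m)) {c d : ℝ} (hK : IntervalIntegrable K volume c d) :
    mulVecE (∫ x in c..d, K x) v = ∫ x in c..d, mulVecE (K x) v := by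
  have h := (((mvCLM n m).flip v).intervalIntegral_comp_comm hK).symm
  simpa [mulVecE_eq] using h

/-- master pointwise integrability -/
lemma integrable_mulVecE_of_bound {n m : ℕ} {K : ℝ → Matrix (Fin n) (Fin m) ℝ}
    {y : ℝ → EuclideanSpace ℝ (Fin m)} {μ : Measure ℝ}
    (hK : AEStronglyMeasurable K μ) {C : ℝ} (hbd : ∀ᵐ θ ∂μ, ‖K θ‖ ≤ C)
    (hy : Integrable y μ) : Integrable (fun θ => mulVecE (K θ) (y θ)) μ := by
  have hKm : AEStronglyMeasurable (fun θ => mvCLM n m (K θ)) μ :=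
    (mvCLM n m).continuous.comp_aestronglyMeasurable hK
  have hmeas : AEStronglyMeasurable (fun θ => mulVecE (K θ) (y θ)) μ := by
    exact
      (ContinuousLinearMap.id ℝ (EuclideanSpace ℝ (Fin m) →L[ℝ] EuclideanSpace ℝ (Fin n))
        ).aestronglyMeasurable_comp₂ hKm hy.1
  refine ((hy.norm.const_mul (‖mvCLM n m‖ * C)).mono' hmeas ?_)
  filter_upwards [hbd] with θ hθ
  calc ‖mulVecE (K θ) (y θ)‖ ≤ ‖mvCLM n m (K θ)‖ * ‖y θ‖ := by
        rw [mulVecE_eq]; exact (mvCLM n m (K θ)).le_opNorm _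
    _ ≤ (‖mvCLM n m‖ * ‖K θ‖) * ‖y θ‖ :=
        mul_le_mul_of_nonneg_right ((mvCLM n m).le_opNorm _) (norm_nonneg _)
    _ ≤ ‖mvCLM n m‖ * C * ‖y θ‖ := by
        have := mul_le_mul_of_nonneg_left hθ (norm_nonneg (mvCLM n m))
        exact mul_le_mul_of_nonneg_right this (norm_nonneg _)

lemma integrableOn_mulVecE_cont {n m : ℕ} {K : ℝ → Matrix (Fin n) (Fin m) ℝ}
    {y : ℝ → EuclideanSpace ℝ (Fin m)} {A : Set ℝ} (hA : MeasurableSet A) (hAc : IsCompact A)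
    (hK : ContinuousOn K A) (hy : IntegrableOn y A) :
    IntegrableOn (fun θ => mulVecE (K θ) (y θ)) A := by
  obtain ⟨C, hC⟩ := hAc.exists_bound_of_continuousOn hK
  exact integrable_mulVecE_of_bound (hK.aestronglyMeasurable hA)
    ((ae_restrict_iff' hA).2 (ae_of_all _ hC)) hy

lemma intervalIntegrable_mulVecE {n m : ℕ} {a b : ℝ} {K : ℝ → Matrix (Fin n) (Fin m) ℝ}
    {y : ℝ → EuclideanSpace ℝ (Fin m)} {c d : ℝ} (h : uIcc c d ⊆ Icc a b)
    (hK : ContinuousOn K (Icc a b)) (hy : IntegrableOn y (Icc a b)) :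
    IntervalIntegrable (fun θ => mulVecE (K θ) (y θ)) volume c d :=
  (integrableOn_mulVecE_cont measurableSet_uIcc isCompact_uIcc (hK.mono h)
    (hy.mono_set h)).intervalIntegrable

lemma isFiniteMeasure_restrict_sub {a b : ℝ} {S : Set ℝ} (hS : S ⊆ Icc a b) :
    IsFiniteMeasure (volume.restrict S) := by
  constructor
  rw [Measure.restrict_apply_univ]
  exact lt_of_le_of_lt (measure_mono hS) measure_Icc_lt_top

/-- product integrability of a continuous kernel against an integrable function -/
lemma integrable_prod_mulVecE {p' m : ℕ} {a b : ℝ}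
    (K : ℝ × ℝ → Matrix (Fin p') (Fin m) ℝ) {y : ℝ → EuclideanSpace ℝ (Fin m)}
    (hK : ContinuousOn K (Icc a b ×ˢ Icc a b)) (hy : IntegrableOn y (Icc a b))
    {S T : Set ℝ} (hS : MeasurableSet S) (hT : MeasurableSet T)
    (hSs : S ⊆ Icc a b) (hTs : T ⊆ Icc a b) :
    Integrable (fun z : ℝ × ℝ => mulVecE (K z) (y z.2))
      ((volume.restrict S).prod (volume.restrict T)) := by
  haveI := isFiniteMeasure_restrict_sub hSs
  haveI := isFiniteMeasure_restrict_sub hTs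
  have hprodmeas : (volume.restrict S).prod (volume.restrict T)
      = (volume : Measure (ℝ × ℝ)).restrict (S ×ˢ T) := by
    rw [Measure.prod_restrict, ← Measure.volume_eq_prod]
  have hKae : AEStronglyMeasurable K ((volume.restrict S).prod (volume.restrict T)) := by
    rw [hprodmeas]
    exact (hK.mono (prod_mono hSs hTs)).aestronglyMeasurable (hS.prod hT)
  have hyT : IntegrableOn y T := hy.mono_set hTs
  have hy2 : AEStronglyMeasurable (fun z : ℝ × ℝ => y z.2)
      ((volume.restrict S).prod (volume.restrict T)) := hyT.aestronglyMeasurable.comp_snd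
  have hmeas : AEStronglyMeasurable (fun z : ℝ × ℝ => mulVecE (K z) (y z.2))
      ((volume.restrict S).prod (volume.restrict T)) := by
    exact
      (ContinuousLinearMap.id ℝ (EuclideanSpace ℝ (Fin m) →L[ℝ] EuclideanSpace ℝ (Fin p'))
        ).aestronglyMeasurable_comp₂
        ((mvCLM p' m).continuous.comp_aestronglyMeasurable hKae) hy2
  obtain ⟨C, hC⟩ := (isCompact_Icc.prod isCompact_Icc).exists_bound_of_continuousOn hK
  have hdom : Integrable (fun z : ℝ × ℝ => (‖mvCLM p' m‖ * C) * ‖y z.2‖)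
      ((volume.restrict S).prod (volume.restrict T)) := by
    have h1 : Integrable (fun z : ℝ × ℝ => (1 : ℝ) * ‖y z.2‖)
        ((volume.restrict S).prod (volume.restrict T)) :=
      (integrable_const (1 : ℝ)).mul_prod hyT.norm
    simpa using h1.const_mul (‖mvCLM p' m‖ * C)
  refine hdom.mono' hmeas ?_
  rw [hprodmeas]
  filter_upwards [ae_restrict_mem (hS.prod hT)] with z hz
  have hzQ : z ∈ Icc a b ×ˢ Icc a b := prod_mono hSs hTs hz
  calc ‖mulVecE (K z) (y z.2)‖ ≤ ‖mvCLM p' m (K z)‖ * ‖y z.2‖ := by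
        rw [mulVecE_eq]; exact (mvCLM p' m (K z)).le_opNorm _
    _ ≤ (‖mvCLM p' m‖ * ‖K z‖) * ‖y z.2‖ :=
        mul_le_mul_of_nonneg_right ((mvCLM p' m).le_opNorm _) (norm_nonneg _)
    _ ≤ ‖mvCLM p' m‖ * C * ‖y z.2‖ := by
        refine mul_le_mul_of_nonneg_right ?_ (norm_nonneg _)
        exact mul_le_mul_of_nonneg_left (hC z hzQ) (norm_nonneg (mvCLM p' m))

section Swaps
variable {E : Type*} [NormedAddCommGroup E] [NormedSpace ℝ E] [CompleteSpace E]

omit [CompleteSpace E] in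
lemma rect_swap {u v c d : ℝ} (huv : u ≤ v) (hcd : c ≤ d) (F : ℝ → ℝ → E)
    (hF : Integrable (fun z : ℝ × ℝ => F z.1 z.2)
      ((volume.restrict (Ioc u v)).prod (volume.restrict (Ioc c d)))) :
    (∫ θ in u..v, ∫ η in c..d, F θ η) = ∫ η in c..d, ∫ θ in u..v, F θ η := by
  rw [intervalIntegral.integral_of_le huv, intervalIntegral.integral_of_le hcd]
  simp_rw [intervalIntegral.integral_of_le hcd, intervalIntegral.integral_of_le huv]
  exact integral_integral_swap hF

omit [CompleteSpace E] in
lemma triangle_swap {u v : ℝ} (huv : u ≤ v) (F : ℝ → ℝ → E)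
    (hF : Integrable (fun z : ℝ × ℝ => F z.1 z.2)
      ((volume.restrict (Ioc u v)).prod (volume.restrict (Ioc u v)))) :
    (∫ θ in u..v, ∫ η in u..θ, F θ η) = ∫ η in u..v, ∫ θ in η..v, F θ η := by
  have hT : MeasurableSet {z : ℝ × ℝ | z.2 ≤ z.1} :=
    measurableSet_le measurable_snd measurable_fst
  set G : ℝ × ℝ → E := fun z => if z.2 ≤ z.1 then F z.1 z.2 else 0 with hGdef
  have hG : Integrable G ((volume.restrict (Ioc u v)).prod (volume.restrict (Ioc u v))) := by
    have h := hF.indicator hT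
    refine h.congr (ae_of_all _ fun z => ?_)
    simp [hGdef, Set.indicator_apply]
  have h1 : ∀ θ ∈ Ioc u v, (∫ η in u..θ, F θ η) = ∫ η in Ioc u v, G (θ, η) := by
    intro θ hθ
    have : (fun η => G (θ, η)) = (Iic θ).indicator (fun η => F θ η) := by
      funext η; simp [hGdef, Set.indicator_apply, Set.mem_Iic]
    rw [this, setIntegral_indicator measurableSet_Iic, Set.Ioc_inter_Iic,
      min_eq_right hθ.2, intervalIntegral.integral_of_le hθ.1.le]
  have h2 : ∀ η ∈ Ioc u v, (∫ θ in Ioc u v, G (θ, η)) = ∫ θ in η..v, F θ η := by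
    intro η hη
    have : (fun θ => G (θ, η)) = (Ici η).indicator (fun θ => F θ η) := by
      funext θ; simp [hGdef, Set.indicator_apply, Set.mem_Ici]
    rw [this, setIntegral_indicator measurableSet_Ici]
    have hset : Ioc u v ∩ Ici η = Icc η v := by
      ext θ
      simp only [Set.mem_inter_iff, Set.mem_Ioc, Set.mem_Ici, Set.mem_Icc]
      constructor
      · rintro ⟨⟨_, h2⟩, h3⟩; exact ⟨h3, h2⟩
      · rintro ⟨h1, h2⟩; exact ⟨⟨lt_of_lt_of_le hη.1 h1, h2⟩, h1⟩
    rw [hset, integral_Icc_eq_integral_Ioc, intervalIntegral.integral_of_le hη.2]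
  calc (∫ θ in u..v, ∫ η in u..θ, F θ η)
      = ∫ θ in Ioc u v, ∫ η in Ioc u v, G (θ, η) := by
        rw [intervalIntegral.integral_of_le huv]
        exact setIntegral_congr_fun measurableSet_Ioc fun θ hθ => h1 θ hθ
    _ = ∫ η in Ioc u v, ∫ θ in Ioc u v, G (θ, η) := integral_integral_swap hG
    _ = ∫ η in u..v, ∫ θ in η..v, F θ η := by
        rw [intervalIntegral.integral_of_le huv]
        exact setIntegral_congr_fun measurableSet_Ioc fun η hη => h2 η hη

omit [CompleteSpace E] in
lemma triangle_swap' {u v : ℝ} (huv : u ≤ v) (F : ℝ → ℝ → E)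
    (hF : Integrable (fun z : ℝ × ℝ => F z.1 z.2)
      ((volume.restrict (Ioc u v)).prod (volume.restrict (Ioc u v)))) :
    (∫ θ in u..v, ∫ η in θ..v, F θ η) = ∫ η in u..v, ∫ θ in u..η, F θ η := by
  have hswap : Integrable (fun z : ℝ × ℝ => F z.2 z.1)
      ((volume.restrict (Ioc u v)).prod (volume.restrict (Ioc u v))) := hF.swap
  exact (triangle_swap huv (fun η θ => F θ η) hswap).symm

end Swaps

section Inner
variable {E : Type*} [NormedAddCommGroup E] [NormedSpace ℝ E]

lemma inner_lower_eq {u w : ℝ} (F : ℝ → ℝ → E) {θ : ℝ} (h1 : u ≤ θ) (h2 : θ ≤ w) :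
    (∫ η in u..θ, F θ η) = ∫ η in Ioc u w, (if η ≤ θ then F θ η else 0) := by
  have : (fun η => if η ≤ θ then F θ η else 0) = (Iic θ).indicator (fun η => F θ η) := by
    funext η; simp [Set.indicator_apply, Set.mem_Iic]
  rw [this, setIntegral_indicator measurableSet_Iic, Set.Ioc_inter_Iic,
    min_eq_right h2, intervalIntegral.integral_of_le h1]

lemma inner_upper_eq {u w : ℝ} (F : ℝ → ℝ → E) {θ : ℝ} (h1 : u ≤ θ) (h2 : θ ≤ w) :
    (∫ η in θ..w, F θ η) = ∫ η in Ioc u w, (if θ < η then F θ η else 0) := by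
  have : (fun η => if θ < η then F θ η else 0) = (Ioi θ).indicator (fun η => F θ η) := by
    funext η; simp [Set.indicator_apply, Set.mem_Ioi]
  rw [this, setIntegral_indicator measurableSet_Ioi, Set.Ioc_inter_Ioi,
    max_eq_right h1, intervalIntegral.integral_of_le h2]

end Inner

section Param

variable {p' m : ℕ} {a b : ℝ} {y : ℝ → EuclideanSpace ℝ (Fin m)}

lemma measurableSet_le_fst : MeasurableSet {z : ℝ × ℝ | z.2 ≤ z.1} :=
  measurableSet_le measurable_snd measurable_fst

lemma measurableSet_lt_snd : MeasurableSet {z : ℝ × ℝ | z.1 < z.2} :=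
  measurableSet_lt measurable_fst measurable_snd

lemma measurableSet_le_snd : MeasurableSet {z : ℝ × ℝ | z.1 ≤ z.2} :=
  measurableSet_le measurable_fst measurable_snd

lemma measurableSet_lt_fst : MeasurableSet {z : ℝ × ℝ | z.2 < z.1} :=
  measurableSet_lt measurable_snd measurable_fst

/-- `θ ↦ ∫_t^θ` integrable on `Ioc u v`, inner over `Ioc t w`. -/
lemma integrableOn_inner_left_lower (K : ℝ × ℝ → Matrix (Fin p') (Fin m) ℝ)
    (hK : ContinuousOn K (Icc a b ×ˢ Icc a b)) (hy : IntegrableOn y (Icc a b))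
    {t u v w : ℝ} (huv : Ioc u v ⊆ Icc a b) (htw : Ioc t w ⊆ Icc a b)
    (htu : t ≤ u) (hvw : v ≤ w) :
    IntegrableOn (fun θ => ∫ η in t..θ, mulVecE (K (θ, η)) (y η)) (Ioc u v) := by
  have hprod := integrable_prod_mulVecE K hK hy measurableSet_Ioc measurableSet_Ioc huv htw
  have h := (hprod.indicator measurableSet_le_fst).integral_prod_left
  refine h.congr ?_
  filter_upwards [ae_restrict_mem measurableSet_Ioc] with θ hθ
  rw [inner_lower_eq (fun θ η => mulVecE (K (θ, η)) (y η)) (htu.trans hθ.1.le)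
    (hθ.2.trans hvw)]
  congr 1

/-- `θ ↦ ∫_θ^w` integrable on `Ioc u v`, inner over `Ioc t w`. -/
lemma integrableOn_inner_left_upper (K : ℝ × ℝ → Matrix (Fin p') (Fin m) ℝ)
    (hK : ContinuousOn K (Icc a b ×ˢ Icc a b)) (hy : IntegrableOn y (Icc a b))
    {t u v w : ℝ} (huv : Ioc u v ⊆ Icc a b) (htw : Ioc t w ⊆ Icc a b)
    (htu : t ≤ u) (hvw : v ≤ w) :
    IntegrableOn (fun θ => ∫ η in θ..w, mulVecE (K (θ, η)) (y η)) (Ioc u v) := by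
  have hprod := integrable_prod_mulVecE K hK hy measurableSet_Ioc measurableSet_Ioc huv htw
  have h := (hprod.indicator measurableSet_lt_snd).integral_prod_left
  refine h.congr ?_
  filter_upwards [ae_restrict_mem measurableSet_Ioc] with θ hθ
  rw [inner_upper_eq (fun θ η => mulVecE (K (θ, η)) (y η)) (htu.trans hθ.1.le)
    (hθ.2.trans hvw)]
  congr 1

/-- `θ ↦ ∫_c^d` (constant limits) integrable on `Ioc u v`. -/
lemma integrableOn_inner_left_const (K : ℝ × ℝ → Matrix (Fin p') (Fin m) ℝ)
    (hK : ContinuousOn K (Icc a b ×ˢ Icc a b)) (hy : IntegrableOn y (Icc a b))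
    {u v c d : ℝ} (huv : Ioc u v ⊆ Icc a b) (hcd : Ioc c d ⊆ Icc a b) (hc : c ≤ d) :
    IntegrableOn (fun θ => ∫ η in c..d, mulVecE (K (θ, η)) (y η)) (Ioc u v) := by
  have hprod := integrable_prod_mulVecE K hK hy measurableSet_Ioc measurableSet_Ioc huv hcd
  have h := hprod.integral_prod_left
  refine h.congr ?_
  filter_upwards [] with θ
  rw [intervalIntegral.integral_of_le hc]

/-- `η ↦ ∫_t^η` (inner variable first coordinate) integrable on `Ioc u v`. -/
lemma integrableOn_inner_right_lower (K : ℝ × ℝ → Matrix (Fin p') (Fin m) ℝ)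
    (hK : ContinuousOn K (Icc a b ×ˢ Icc a b)) (hy : IntegrableOn y (Icc a b))
    {t u v w : ℝ} (huv : Ioc u v ⊆ Icc a b) (htw : Ioc t w ⊆ Icc a b)
    (htu : t ≤ u) (hvw : v ≤ w) :
    IntegrableOn (fun η => ∫ θ in t..η, mulVecE (K (θ, η)) (y η)) (Ioc u v) := by
  have hprod := integrable_prod_mulVecE K hK hy measurableSet_Ioc measurableSet_Ioc htw huv
  have h := (hprod.indicator measurableSet_le_snd).integral_prod_right
  refine h.congr ?_
  filter_upwards [ae_restrict_mem measurableSet_Ioc] with η hη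
  rw [inner_lower_eq (fun η θ => mulVecE (K (θ, η)) (y η)) (htu.trans hη.1.le)
    (hη.2.trans hvw)]
  congr 1

/-- `η ↦ ∫_η^w` (inner variable first coordinate) integrable on `Ioc u v`. -/
lemma integrableOn_inner_right_upper (K : ℝ × ℝ → Matrix (Fin p') (Fin m) ℝ)
    (hK : ContinuousOn K (Icc a b ×ˢ Icc a b)) (hy : IntegrableOn y (Icc a b))
    {t u v w : ℝ} (huv : Ioc u v ⊆ Icc a b) (htw : Ioc t w ⊆ Icc a b)
    (htu : t ≤ u) (hvw : v ≤ w) :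
    IntegrableOn (fun η => ∫ θ in η..w, mulVecE (K (θ, η)) (y η)) (Ioc u v) := by
  have hprod := integrable_prod_mulVecE K hK hy measurableSet_Ioc measurableSet_Ioc htw huv
  have h := (hprod.indicator measurableSet_lt_fst).integral_prod_right
  refine h.congr ?_
  filter_upwards [ae_restrict_mem measurableSet_Ioc] with η hη
  rw [inner_upper_eq (fun η θ => mulVecE (K (θ, η)) (y η)) (htu.trans hη.1.le)
    (hη.2.trans hvw)]
  congr 1

/-- `η ↦ ∫_c^d` (constant limits, inner variable first coordinate) integrable on `Ioc u v`. -/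
lemma integrableOn_inner_right_const (K : ℝ × ℝ → Matrix (Fin p') (Fin m) ℝ)
    (hK : ContinuousOn K (Icc a b ×ˢ Icc a b)) (hy : IntegrableOn y (Icc a b))
    {u v c d : ℝ} (huv : Ioc u v ⊆ Icc a b) (hcd : Ioc c d ⊆ Icc a b) (hc : c ≤ d) :
    IntegrableOn (fun η => ∫ θ in c..d, mulVecE (K (θ, η)) (y η)) (Ioc u v) := by
  have hprod := integrable_prod_mulVecE K hK hy measurableSet_Ioc measurableSet_Ioc hcd huv
  have h := hprod.integral_prod_right
  refine h.congr ?_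
  filter_upwards [] with η
  rw [intervalIntegral.integral_of_le hc]

end Param

lemma slice_fst {k l : ℕ} {a b : ℝ} {N : ℝ → ℝ → Matrix (Fin k) (Fin l) ℝ}
    (hN : ContinuousOn (fun z : ℝ × ℝ => N z.1 z.2) (Icc a b ×ˢ Icc a b))
    {θ : ℝ} (hθ : θ ∈ Icc a b) : ContinuousOn (fun η => N θ η) (Icc a b) :=
  hN.comp ((continuous_const.prodMk continuous_id).continuousOn) (fun _ hη => ⟨hθ, hη⟩)

lemma slice_snd {k l : ℕ} {a b : ℝ} {N : ℝ → ℝ → Matrix (Fin k) (Fin l) ℝ}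
    (hN : ContinuousOn (fun z : ℝ × ℝ => N z.1 z.2) (Icc a b ×ˢ Icc a b))
    {η : ℝ} (hη : η ∈ Icc a b) : ContinuousOn (fun θ => N θ η) (Icc a b) :=
  hN.comp ((continuous_id.prodMk continuous_const).continuousOn) (fun _ hθ => ⟨hθ, hη⟩)

set_option maxHeartbeats 2000000 in
theorem threePI_comp_aux {p n m : ℕ} {a b : ℝ} (hab : a < b)
    (C₀ : ℝ → Matrix (Fin p) (Fin n) ℝ) (C₁ C₂ : ℝ → ℝ → Matrix (Fin p) (Fin n) ℝ)
    (R₀ : ℝ → Matrix (Fin n) (Fin m) ℝ) (R₁ R₂ : ℝ → ℝ → Matrix (Fin n) (Fin m) ℝ)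
    (hC₀ : ContinuousOn C₀ (Icc a b))
    (hC₁ : ContinuousOn (fun z : ℝ × ℝ => C₁ z.1 z.2) (Icc a b ×ˢ Icc a b))
    (hC₂ : ContinuousOn (fun z : ℝ × ℝ => C₂ z.1 z.2) (Icc a b ×ˢ Icc a b))
    (hR₀ : ContinuousOn R₀ (Icc a b))
    (hR₁ : ContinuousOn (fun z : ℝ × ℝ => R₁ z.1 z.2) (Icc a b ×ˢ Icc a b))
    (hR₂ : ContinuousOn (fun z : ℝ × ℝ => R₂ z.1 z.2) (Icc a b ×ˢ Icc a b))
    (y : ℝ → EuclideanSpace ℝ (Fin m))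
    (hy : MemLp y 2 (volume.restrict (Icc a b))) :
    ∀ᵐ s ∂(volume.restrict (Icc a b)),
      threePI a b C₀ C₁ C₂ (threePI a b R₀ R₁ R₂ y) s
        = threePI a b
            (fun s => C₀ s * R₀ s)
            (fun s η => C₀ s * R₁ s η + C₁ s η * R₀ η
              + (∫ θ in a..η, C₁ s θ * R₂ θ η) + (∫ θ in η..s, C₁ s θ * R₁ θ η)
              + ∫ θ in s..b, C₂ s θ * R₁ θ η)
            (fun s η => C₀ s * R₂ s η + C₂ s η * R₀ η
              + (∫ θ in a..s, C₁ s θ * R₂ θ η) + (∫ θ in s..η, C₂ s θ * R₂ θ η)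
              + ∫ θ in η..b, C₂ s θ * R₁ θ η)
            y s := by
  haveI := isFiniteMeasure_restrict_sub (subset_refl (Icc a b))
  have hyI : IntegrableOn y (Icc a b) := hy.integrable one_le_two
  refine (ae_restrict_iff' measurableSet_Icc).2 (ae_of_all _ fun s hs => ?_)
  have has : a ≤ s := hs.1
  have hsb : s ≤ b := hs.2
  have hmemA : a ∈ Icc a b := ⟨le_rfl, hab.le⟩
  have hmemB : b ∈ Icc a b := ⟨hab.le, le_rfl⟩
  have hUas : uIcc a s ⊆ Icc a b := uIcc_subset_Icc hmemA hs
  have hUsb : uIcc s b ⊆ Icc a b := uIcc_subset_Icc hs hmemB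
  have hsubAS : Ioc a s ⊆ Icc a b := Ioc_subset_Icc_self.trans (Icc_subset_Icc le_rfl hsb)
  have hsubSB : Ioc s b ⊆ Icc a b := Ioc_subset_Icc_self.trans (Icc_subset_Icc has le_rfl)
  have hsubAB : Ioc a b ⊆ Icc a b := Ioc_subset_Icc_self
  -- multiplication maps
  have hmulCR : Continuous (fun q : Matrix (Fin p) (Fin n) ℝ × Matrix (Fin n) (Fin m) ℝ =>
      q.1 * q.2) := Continuous.matrix_mul continuous_fst continuous_snd
  -- one-variable continuous kernels
  have hC1s : ContinuousOn (fun θ => C₁ s θ) (Icc a b) := slice_fst hC₁ hs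
  have hC2s : ContinuousOn (fun θ => C₂ s θ) (Icc a b) := slice_fst hC₂ hs
  have hR1s : ContinuousOn (fun η => R₁ s η) (Icc a b) := slice_fst hR₁ hs
  have hR2s : ContinuousOn (fun η => R₂ s η) (Icc a b) := slice_fst hR₂ hs
  have kC0R1 : ContinuousOn (fun η => C₀ s * R₁ s η) (Icc a b) :=
    hmulCR.comp_continuousOn (continuousOn_const.prodMk hR1s)
  have kC0R2 : ContinuousOn (fun η => C₀ s * R₂ s η) (Icc a b) :=
    hmulCR.comp_continuousOn (continuousOn_const.prodMk hR2s)
  have kC1R0 : ContinuousOn (fun θ => C₁ s θ * R₀ θ) (Icc a b) :=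
    hmulCR.comp_continuousOn (hC1s.prodMk hR₀)
  have kC2R0 : ContinuousOn (fun θ => C₂ s θ * R₀ θ) (Icc a b) :=
    hmulCR.comp_continuousOn (hC2s.prodMk hR₀)
  -- two-variable continuous kernels on the square
  have hC1fst : ContinuousOn (fun z : ℝ × ℝ => C₁ s z.1) (Icc a b ×ˢ Icc a b) :=
    hC₁.comp ((continuous_const.prodMk continuous_fst).continuousOn) (fun z hz => ⟨hs, hz.1⟩)
  have hC2fst : ContinuousOn (fun z : ℝ × ℝ => C₂ s z.1) (Icc a b ×ˢ Icc a b) :=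
    hC₂.comp ((continuous_const.prodMk continuous_fst).continuousOn) (fun z hz => ⟨hs, hz.1⟩)
  have hK11 : ContinuousOn (fun z : ℝ × ℝ => C₁ s z.1 * R₁ z.1 z.2) (Icc a b ×ˢ Icc a b) :=
    hmulCR.comp_continuousOn (hC1fst.prodMk hR₁)
  have hK12 : ContinuousOn (fun z : ℝ × ℝ => C₁ s z.1 * R₂ z.1 z.2) (Icc a b ×ˢ Icc a b) :=
    hmulCR.comp_continuousOn (hC1fst.prodMk hR₂)
  have hK21 : ContinuousOn (fun z : ℝ × ℝ => C₂ s z.1 * R₁ z.1 z.2) (Icc a b ×ˢ Icc a b) :=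
    hmulCR.comp_continuousOn (hC2fst.prodMk hR₁)
  have hK22 : ContinuousOn (fun z : ℝ × ℝ => C₂ s z.1 * R₂ z.1 z.2) (Icc a b ×ˢ Icc a b) :=
    hmulCR.comp_continuousOn (hC2fst.prodMk hR₂)
  -- the pointwise expansion of the inner 3-PI operator hit by a matrix kernel
  have expand : ∀ (A : ℝ → Matrix (Fin p) (Fin n) ℝ), ∀ θ ∈ Icc a b,
      mulVecE (A θ) (threePI a b R₀ R₁ R₂ y θ)
        = mulVecE (A θ * R₀ θ) (y θ)
          + (∫ η in a..θ, mulVecE (A θ * R₁ θ η) (y η))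
          + ∫ η in θ..b, mulVecE (A θ * R₂ θ η) (y η) := by
    intro A θ hθ
    have hii1 : IntervalIntegrable (fun η => mulVecE (R₁ θ η) (y η)) volume a θ :=
      intervalIntegrable_mulVecE (uIcc_subset_Icc hmemA hθ) (slice_fst hR₁ hθ) hyI
    have hii2 : IntervalIntegrable (fun η => mulVecE (R₂ θ η) (y η)) volume θ b :=
      intervalIntegrable_mulVecE (uIcc_subset_Icc hθ hmemB) (slice_fst hR₂ hθ) hyI
    have hz : threePI a b R₀ R₁ R₂ y θ
        = mulVecE (R₀ θ) (y θ) + (∫ η in a..θ, mulVecE (R₁ θ η) (y η))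
          + ∫ η in θ..b, mulVecE (R₂ θ η) (y η) := rfl
    rw [hz, mulVecE_add_right, mulVecE_add_right,
      mulVecE_intervalIntegral (A θ) hii1, mulVecE_intervalIntegral (A θ) hii2]
    simp only [← mulVecE_mul]
  -- interval integrability facts over [a,s]
  have iiC1R0 : IntervalIntegrable (fun θ => mulVecE (C₁ s θ * R₀ θ) (y θ)) volume a s :=
    intervalIntegrable_mulVecE hUas kC1R0 hyI
  have iiG : IntervalIntegrable
      (fun θ => ∫ η in a..θ, mulVecE (C₁ s θ * R₁ θ η) (y η)) volume a s :=
    (intervalIntegrable_iff_integrableOn_Ioc_of_le has).2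
      (integrableOn_inner_left_lower (fun z => C₁ s z.1 * R₁ z.1 z.2) hK11 hyI
        hsubAS hsubAB le_rfl hsb)
  have iiH : IntervalIntegrable
      (fun θ => ∫ η in θ..b, mulVecE (C₁ s θ * R₂ θ η) (y η)) volume a s :=
    (intervalIntegrable_iff_integrableOn_Ioc_of_le has).2
      (integrableOn_inner_left_upper (fun z => C₁ s z.1 * R₂ z.1 z.2) hK12 hyI
        hsubAS hsubAB le_rfl hsb)
  have iiHa : IntervalIntegrable
      (fun θ => ∫ η in θ..s, mulVecE (C₁ s θ * R₂ θ η) (y η)) volume a s :=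
    (intervalIntegrable_iff_integrableOn_Ioc_of_le has).2
      (integrableOn_inner_left_upper (fun z => C₁ s z.1 * R₂ z.1 z.2) hK12 hyI
        hsubAS hsubAS le_rfl le_rfl)
  have iiHb : IntervalIntegrable
      (fun θ => ∫ η in s..b, mulVecE (C₁ s θ * R₂ θ η) (y η)) volume a s :=
    (intervalIntegrable_iff_integrableOn_Ioc_of_le has).2
      (integrableOn_inner_left_const (fun z => C₁ s z.1 * R₂ z.1 z.2) hK12 hyI
        hsubAS hsubSB hsb)
  -- interval integrability facts over [s,b]
  have iiC2R0 : IntervalIntegrable (fun θ => mulVecE (C₂ s θ * R₀ θ) (y θ)) volume s b :=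
    intervalIntegrable_mulVecE hUsb kC2R0 hyI
  have iiG' : IntervalIntegrable
      (fun θ => ∫ η in a..θ, mulVecE (C₂ s θ * R₁ θ η) (y η)) volume s b :=
    (intervalIntegrable_iff_integrableOn_Ioc_of_le hsb).2
      (integrableOn_inner_left_lower (fun z => C₂ s z.1 * R₁ z.1 z.2) hK21 hyI
        hsubSB hsubAB has le_rfl)
  have iiG'a : IntervalIntegrable
      (fun θ => ∫ η in a..s, mulVecE (C₂ s θ * R₁ θ η) (y η)) volume s b :=
    (intervalIntegrable_iff_integrableOn_Ioc_of_le hsb).2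
      (integrableOn_inner_left_const (fun z => C₂ s z.1 * R₁ z.1 z.2) hK21 hyI
        hsubSB hsubAS has)
  have iiG'b : IntervalIntegrable
      (fun θ => ∫ η in s..θ, mulVecE (C₂ s θ * R₁ θ η) (y η)) volume s b :=
    (intervalIntegrable_iff_integrableOn_Ioc_of_le hsb).2
      (integrableOn_inner_left_lower (fun z => C₂ s z.1 * R₁ z.1 z.2) hK21 hyI
        hsubSB hsubSB le_rfl le_rfl)
  have iiH' : IntervalIntegrable
      (fun θ => ∫ η in θ..b, mulVecE (C₂ s θ * R₂ θ η) (y η)) volume s b :=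
    (intervalIntegrable_iff_integrableOn_Ioc_of_le hsb).2
      (integrableOn_inner_left_upper (fun z => C₂ s z.1 * R₂ z.1 z.2) hK22 hyI
        hsubSB hsubSB le_rfl le_rfl)
  -- product integrability for the Fubini swaps
  have hF11ss := integrable_prod_mulVecE (fun z => C₁ s z.1 * R₁ z.1 z.2) hK11 hyI
    measurableSet_Ioc measurableSet_Ioc hsubAS hsubAS
  have hF12ss := integrable_prod_mulVecE (fun z => C₁ s z.1 * R₂ z.1 z.2) hK12 hyI
    measurableSet_Ioc measurableSet_Ioc hsubAS hsubAS
  have hF12sb := integrable_prod_mulVecE (fun z => C₁ s z.1 * R₂ z.1 z.2) hK12 hyI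
    measurableSet_Ioc measurableSet_Ioc hsubAS hsubSB
  have hF21bs := integrable_prod_mulVecE (fun z => C₂ s z.1 * R₁ z.1 z.2) hK21 hyI
    measurableSet_Ioc measurableSet_Ioc hsubSB hsubAS
  have hF21bb := integrable_prod_mulVecE (fun z => C₂ s z.1 * R₁ z.1 z.2) hK21 hyI
    measurableSet_Ioc measurableSet_Ioc hsubSB hsubSB
  have hF22bb := integrable_prod_mulVecE (fun z => C₂ s z.1 * R₂ z.1 z.2) hK22 hyI
    measurableSet_Ioc measurableSet_Ioc hsubSB hsubSB
  -- Equation 1 : the C₀ term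
  have eq1 : mulVecE (C₀ s) (threePI a b R₀ R₁ R₂ y s)
      = mulVecE (C₀ s * R₀ s) (y s)
        + (∫ η in a..s, mulVecE (C₀ s * R₁ s η) (y η))
        + ∫ η in s..b, mulVecE (C₀ s * R₂ s η) (y η) := expand (fun _ => C₀ s) s hs
  -- Equation 2 : the C₁ term
  have eq2 : (∫ θ in a..s, mulVecE (C₁ s θ) (threePI a b R₀ R₁ R₂ y θ))
      = (∫ θ in a..s, mulVecE (C₁ s θ * R₀ θ) (y θ))
        + (∫ η in a..s, ∫ θ in η..s, mulVecE (C₁ s θ * R₁ θ η) (y η))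
        + ((∫ η in a..s, ∫ θ in a..η, mulVecE (C₁ s θ * R₂ θ η) (y η))
          + ∫ η in s..b, ∫ θ in a..s, mulVecE (C₁ s θ * R₂ θ η) (y η)) := by
    have hsplit : EqOn (fun θ => ∫ η in θ..b, mulVecE (C₁ s θ * R₂ θ η) (y η))
        (fun θ => (∫ η in θ..s, mulVecE (C₁ s θ * R₂ θ η) (y η))
          + ∫ η in s..b, mulVecE (C₁ s θ * R₂ θ η) (y η)) (uIcc a s) := by
      intro θ hθ
      have hθ' : θ ∈ Icc a b := hUas hθ
      have i1 : IntervalIntegrable (fun η => mulVecE (C₁ s θ * R₂ θ η) (y η)) volume θ s :=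
        intervalIntegrable_mulVecE (uIcc_subset_Icc hθ' hs)
          (hmulCR.comp_continuousOn (continuousOn_const.prodMk (slice_fst hR₂ hθ'))) hyI
      have i2 : IntervalIntegrable (fun η => mulVecE (C₁ s θ * R₂ θ η) (y η)) volume s b :=
        intervalIntegrable_mulVecE hUsb
          (hmulCR.comp_continuousOn (continuousOn_const.prodMk (slice_fst hR₂ hθ'))) hyI
      exact (intervalIntegral.integral_add_adjacent_intervals i1 i2).symm
    rw [intervalIntegral.integral_congr (fun θ hθ => expand (C₁ s) θ (hUas hθ))]
    rw [intervalIntegral.integral_add (iiC1R0.add iiG) iiH,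
      intervalIntegral.integral_add iiC1R0 iiG]
    rw [triangle_swap has (fun θ η => mulVecE (C₁ s θ * R₁ θ η) (y η)) hF11ss]
    rw [intervalIntegral.integral_congr hsplit]
    rw [intervalIntegral.integral_add iiHa iiHb]
    rw [triangle_swap' has (fun θ η => mulVecE (C₁ s θ * R₂ θ η) (y η)) hF12ss,
      rect_swap has hsb (fun θ η => mulVecE (C₁ s θ * R₂ θ η) (y η)) hF12sb]
  -- Equation 3 : the C₂ term
  have eq3 : (∫ θ in s..b, mulVecE (C₂ s θ) (threePI a b R₀ R₁ R₂ y θ))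
      = (∫ θ in s..b, mulVecE (C₂ s θ * R₀ θ) (y θ))
        + ((∫ η in a..s, ∫ θ in s..b, mulVecE (C₂ s θ * R₁ θ η) (y η))
          + ∫ η in s..b, ∫ θ in η..b, mulVecE (C₂ s θ * R₁ θ η) (y η))
        + ∫ η in s..b, ∫ θ in s..η, mulVecE (C₂ s θ * R₂ θ η) (y η) := by
    have hsplit : EqOn (fun θ => ∫ η in a..θ, mulVecE (C₂ s θ * R₁ θ η) (y η))
        (fun θ => (∫ η in a..s, mulVecE (C₂ s θ * R₁ θ η) (y η))
          + ∫ η in s..θ, mulVecE (C₂ s θ * R₁ θ η) (y η)) (uIcc s b) := by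
      intro θ hθ
      have hθ' : θ ∈ Icc a b := hUsb hθ
      have i1 : IntervalIntegrable (fun η => mulVecE (C₂ s θ * R₁ θ η) (y η)) volume a s :=
        intervalIntegrable_mulVecE hUas
          (hmulCR.comp_continuousOn (continuousOn_const.prodMk (slice_fst hR₁ hθ'))) hyI
      have i2 : IntervalIntegrable (fun η => mulVecE (C₂ s θ * R₁ θ η) (y η)) volume s θ :=
        intervalIntegrable_mulVecE (uIcc_subset_Icc hs hθ')
          (hmulCR.comp_continuousOn (continuousOn_const.prodMk (slice_fst hR₁ hθ'))) hyI
      exact (intervalIntegral.integral_add_adjacent_intervals i1 i2).symm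
    rw [intervalIntegral.integral_congr (fun θ hθ => expand (C₂ s) θ (hUsb hθ))]
    rw [intervalIntegral.integral_add (iiC2R0.add iiG') iiH',
      intervalIntegral.integral_add iiC2R0 iiG']
    rw [intervalIntegral.integral_congr hsplit]
    rw [intervalIntegral.integral_add iiG'a iiG'b]
    rw [rect_swap hsb has (fun θ η => mulVecE (C₂ s θ * R₁ θ η) (y η)) hF21bs]
    rw [triangle_swap hsb (fun θ η => mulVecE (C₂ s θ * R₁ θ η) (y η)) hF21bb]
    rw [triangle_swap' hsb (fun θ η => mulVecE (C₂ s θ * R₂ θ η) (y η)) hF22bb]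
  -- Equation 4 : the composite kernel over [a,s]
  have eq4 : (∫ η in a..s, mulVecE (C₀ s * R₁ s η + C₁ s η * R₀ η
        + (∫ θ in a..η, C₁ s θ * R₂ θ η) + (∫ θ in η..s, C₁ s θ * R₁ θ η)
        + ∫ θ in s..b, C₂ s θ * R₁ θ η) (y η))
      = (∫ η in a..s, mulVecE (C₀ s * R₁ s η) (y η))
        + (∫ η in a..s, mulVecE (C₁ s η * R₀ η) (y η))
        + (∫ η in a..s, ∫ θ in a..η, mulVecE (C₁ s θ * R₂ θ η) (y η))
        + (∫ η in a..s, ∫ θ in η..s, mulVecE (C₁ s θ * R₁ θ η) (y η))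
        + ∫ η in a..s, ∫ θ in s..b, mulVecE (C₂ s θ * R₁ θ η) (y η) := by
    have hpt : EqOn (fun η => mulVecE (C₀ s * R₁ s η + C₁ s η * R₀ η
          + (∫ θ in a..η, C₁ s θ * R₂ θ η) + (∫ θ in η..s, C₁ s θ * R₁ θ η)
          + ∫ θ in s..b, C₂ s θ * R₁ θ η) (y η))
        (fun η => mulVecE (C₀ s * R₁ s η) (y η) + mulVecE (C₁ s η * R₀ η) (y η)
          + (∫ θ in a..η, mulVecE (C₁ s θ * R₂ θ η) (y η))
          + (∫ θ in η..s, mulVecE (C₁ s θ * R₁ θ η) (y η))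
          + ∫ θ in s..b, mulVecE (C₂ s θ * R₁ θ η) (y η)) (uIcc a s) := by
      intro η hη
      have hη' : η ∈ Icc a b := hUas hη
      have j3 : IntervalIntegrable (fun θ => C₁ s θ * R₂ θ η) volume a η :=
        ((hmulCR.comp_continuousOn (hC1s.prodMk (slice_snd hR₂ hη'))).mono
          (uIcc_subset_Icc hmemA hη')).intervalIntegrable
      have j4 : IntervalIntegrable (fun θ => C₁ s θ * R₁ θ η) volume η s :=
        ((hmulCR.comp_continuousOn (hC1s.prodMk (slice_snd hR₁ hη'))).mono
          (uIcc_subset_Icc hη' hs)).intervalIntegrable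
      have j5 : IntervalIntegrable (fun θ => C₂ s θ * R₁ θ η) volume s b :=
        ((hmulCR.comp_continuousOn (hC2s.prodMk (slice_snd hR₁ hη'))).mono hUsb).intervalIntegrable
      show mulVecE _ (y η) = _
      rw [mulVecE_add_left, mulVecE_add_left, mulVecE_add_left, mulVecE_add_left,
        intervalIntegral_mulVecE (y η) j3, intervalIntegral_mulVecE (y η) j4,
        intervalIntegral_mulVecE (y η) j5]
    rw [intervalIntegral.integral_congr hpt]
    have ii41 : IntervalIntegrable (fun η => mulVecE (C₀ s * R₁ s η) (y η)) volume a s :=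
      intervalIntegrable_mulVecE hUas kC0R1 hyI
    have ii43 : IntervalIntegrable
        (fun η => ∫ θ in a..η, mulVecE (C₁ s θ * R₂ θ η) (y η)) volume a s :=
      (intervalIntegrable_iff_integrableOn_Ioc_of_le has).2
        (integrableOn_inner_right_lower (fun z => C₁ s z.1 * R₂ z.1 z.2) hK12 hyI
          hsubAS hsubAS le_rfl le_rfl)
    have ii44 : IntervalIntegrable
        (fun η => ∫ θ in η..s, mulVecE (C₁ s θ * R₁ θ η) (y η)) volume a s :=
      (intervalIntegrable_iff_integrableOn_Ioc_of_le has).2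
        (integrableOn_inner_right_upper (fun z => C₁ s z.1 * R₁ z.1 z.2) hK11 hyI
          hsubAS hsubAS le_rfl le_rfl)
    have ii45 : IntervalIntegrable
        (fun η => ∫ θ in s..b, mulVecE (C₂ s θ * R₁ θ η) (y η)) volume a s :=
      (intervalIntegrable_iff_integrableOn_Ioc_of_le has).2
        (integrableOn_inner_right_const (fun z => C₂ s z.1 * R₁ z.1 z.2) hK21 hyI
          hsubAS hsubSB hsb)
    rw [intervalIntegral.integral_add (((ii41.add iiC1R0).add ii43).add ii44) ii45,
      intervalIntegral.integral_add ((ii41.add iiC1R0).add ii43) ii44,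
      intervalIntegral.integral_add (ii41.add iiC1R0) ii43,
      intervalIntegral.integral_add ii41 iiC1R0]
  -- Equation 5 : the composite kernel over [s,b]
  have eq5 : (∫ η in s..b, mulVecE (C₀ s * R₂ s η + C₂ s η * R₀ η
        + (∫ θ in a..s, C₁ s θ * R₂ θ η) + (∫ θ in s..η, C₂ s θ * R₂ θ η)
        + ∫ θ in η..b, C₂ s θ * R₁ θ η) (y η))
      = (∫ η in s..b, mulVecE (C₀ s * R₂ s η) (y η))
        + (∫ η in s..b, mulVecE (C₂ s η * R₀ η) (y η))
        + (∫ η in s..b, ∫ θ in a..s, mulVecE (C₁ s θ * R₂ θ η) (y η))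
        + (∫ η in s..b, ∫ θ in s..η, mulVecE (C₂ s θ * R₂ θ η) (y η))
        + ∫ η in s..b, ∫ θ in η..b, mulVecE (C₂ s θ * R₁ θ η) (y η) := by
    have hpt : EqOn (fun η => mulVecE (C₀ s * R₂ s η + C₂ s η * R₀ η
          + (∫ θ in a..s, C₁ s θ * R₂ θ η) + (∫ θ in s..η, C₂ s θ * R₂ θ η)
          + ∫ θ in η..b, C₂ s θ * R₁ θ η) (y η))
        (fun η => mulVecE (C₀ s * R₂ s η) (y η) + mulVecE (C₂ s η * R₀ η) (y η)
          + (∫ θ in a..s, mulVecE (C₁ s θ * R₂ θ η) (y η))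
          + (∫ θ in s..η, mulVecE (C₂ s θ * R₂ θ η) (y η))
          + ∫ θ in η..b, mulVecE (C₂ s θ * R₁ θ η) (y η)) (uIcc s b) := by
      intro η hη
      have hη' : η ∈ Icc a b := hUsb hη
      have j3 : IntervalIntegrable (fun θ => C₁ s θ * R₂ θ η) volume a s :=
        ((hmulCR.comp_continuousOn (hC1s.prodMk (slice_snd hR₂ hη'))).mono hUas).intervalIntegrable
      have j4 : IntervalIntegrable (fun θ => C₂ s θ * R₂ θ η) volume s η :=
        ((hmulCR.comp_continuousOn (hC2s.prodMk (slice_snd hR₂ hη'))).mono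
          (uIcc_subset_Icc hs hη')).intervalIntegrable
      have j5 : IntervalIntegrable (fun θ => C₂ s θ * R₁ θ η) volume η b :=
        ((hmulCR.comp_continuousOn (hC2s.prodMk (slice_snd hR₁ hη'))).mono
          (uIcc_subset_Icc hη' hmemB)).intervalIntegrable
      show mulVecE _ (y η) = _
      rw [mulVecE_add_left, mulVecE_add_left, mulVecE_add_left, mulVecE_add_left,
        intervalIntegral_mulVecE (y η) j3, intervalIntegral_mulVecE (y η) j4,
        intervalIntegral_mulVecE (y η) j5]
    rw [intervalIntegral.integral_congr hpt]
    have ii51 : IntervalIntegrable (fun η => mulVecE (C₀ s * R₂ s η) (y η)) volume s b :=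
      intervalIntegrable_mulVecE hUsb kC0R2 hyI
    have ii53 : IntervalIntegrable
        (fun η => ∫ θ in a..s, mulVecE (C₁ s θ * R₂ θ η) (y η)) volume s b :=
      (intervalIntegrable_iff_integrableOn_Ioc_of_le hsb).2
        (integrableOn_inner_right_const (fun z => C₁ s z.1 * R₂ z.1 z.2) hK12 hyI
          hsubSB hsubAS has)
    have ii54 : IntervalIntegrable
        (fun η => ∫ θ in s..η, mulVecE (C₂ s θ * R₂ θ η) (y η)) volume s b :=
      (intervalIntegrable_iff_integrableOn_Ioc_of_le hsb).2
        (integrableOn_inner_right_lower (fun z => C₂ s z.1 * R₂ z.1 z.2) hK22 hyI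
          hsubSB hsubSB le_rfl le_rfl)
    have ii55 : IntervalIntegrable
        (fun η => ∫ θ in η..b, mulVecE (C₂ s θ * R₁ θ η) (y η)) volume s b :=
      (intervalIntegrable_iff_integrableOn_Ioc_of_le hsb).2
        (integrableOn_inner_right_upper (fun z => C₂ s z.1 * R₁ z.1 z.2) hK21 hyI
          hsubSB hsubSB le_rfl le_rfl)
    rw [intervalIntegral.integral_add (((ii51.add iiC2R0).add ii53).add ii54) ii55,
      intervalIntegral.integral_add ((ii51.add iiC2R0).add ii53) ii54,
      intervalIntegral.integral_add (ii51.add iiC2R0) ii53,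
      intervalIntegral.integral_add ii51 iiC2R0]
  -- assemble
  have hLHS : threePI a b C₀ C₁ C₂ (threePI a b R₀ R₁ R₂ y) s
      = mulVecE (C₀ s) (threePI a b R₀ R₁ R₂ y s)
        + (∫ θ in a..s, mulVecE (C₁ s θ) (threePI a b R₀ R₁ R₂ y θ))
        + ∫ θ in s..b, mulVecE (C₂ s θ) (threePI a b R₀ R₁ R₂ y θ) := rfl
  have hRHS : threePI a b
        (fun s => C₀ s * R₀ s)
        (fun s η => C₀ s * R₁ s η + C₁ s η * R₀ η
          + (∫ θ in a..η, C₁ s θ * R₂ θ η) + (∫ θ in η..s, C₁ s θ * R₁ θ η)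
          + ∫ θ in s..b, C₂ s θ * R₁ θ η)
        (fun s η => C₀ s * R₂ s η + C₂ s η * R₀ η
          + (∫ θ in a..s, C₁ s θ * R₂ θ η) + (∫ θ in s..η, C₂ s θ * R₂ θ η)
          + ∫ θ in η..b, C₂ s θ * R₁ θ η) y s
      = mulVecE (C₀ s * R₀ s) (y s)
        + (∫ η in a..s, mulVecE (C₀ s * R₁ s η + C₁ s η * R₀ η
            + (∫ θ in a..η, C₁ s θ * R₂ θ η) + (∫ θ in η..s, C₁ s θ * R₁ θ η)
            + ∫ θ in s..b, C₂ s θ * R₁ θ η) (y η))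
        + ∫ η in s..b, mulVecE (C₀ s * R₂ s η + C₂ s η * R₀ η
            + (∫ θ in a..s, C₁ s θ * R₂ θ η) + (∫ θ in s..η, C₂ s θ * R₂ θ η)
            + ∫ θ in η..b, C₂ s θ * R₁ θ η) (y η) := rfl
  rw [hLHS, hRHS, eq1, eq2, eq3, eq4, eq5]
  abel

end AuxTop

/-- The composition of two 3-PI operators is the 3-PI operator with the stated
composite kernels: for every `y ∈ L²` and almost every `s ∈ [a,b]`,
`(P_{C₀,C₁,C₂}(P_{R₀,R₁,R₂} y))(s) = (P_{R̂₀,R̂₁,R̂₂} y)(s)`. -/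
theorem threePI_comp {p n m : ℕ} {a b : ℝ} (hab : a < b)
    (C₀ : ℝ → Matrix (Fin p) (Fin n) ℝ) (C₁ C₂ : ℝ → ℝ → Matrix (Fin p) (Fin n) ℝ)
    (R₀ : ℝ → Matrix (Fin n) (Fin m) ℝ) (R₁ R₂ : ℝ → ℝ → Matrix (Fin n) (Fin m) ℝ)
    (hC₀ : ContinuousOn C₀ (Icc a b))
    (hC₁ : ContinuousOn (fun z : ℝ × ℝ => C₁ z.1 z.2) (Icc a b ×ˢ Icc a b))
    (hC₂ : ContinuousOn (fun z : ℝ × ℝ => C₂ z.1 z.2) (Icc a b ×ˢ Icc a b))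
    (hR₀ : ContinuousOn R₀ (Icc a b))
    (hR₁ : ContinuousOn (fun z : ℝ × ℝ => R₁ z.1 z.2) (Icc a b ×ˢ Icc a b))
    (hR₂ : ContinuousOn (fun z : ℝ × ℝ => R₂ z.1 z.2) (Icc a b ×ˢ Icc a b))
    (y : ℝ → EuclideanSpace ℝ (Fin m))
    (hy : MemLp y 2 (volume.restrict (Icc a b))) :
    ∀ᵐ s ∂(volume.restrict (Icc a b)),
      threePI a b C₀ C₁ C₂ (threePI a b R₀ R₁ R₂ y) s
        = threePI a b
            (fun s => C₀ s * R₀ s)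
            (fun s η => C₀ s * R₁ s η + C₁ s η * R₀ η
              + (∫ θ in a..η, C₁ s θ * R₂ θ η) + (∫ θ in η..s, C₁ s θ * R₁ θ η)
              + ∫ θ in s..b, C₂ s θ * R₁ θ η)
            (fun s η => C₀ s * R₂ s η + C₂ s η * R₀ η
              + (∫ θ in a..s, C₁ s θ * R₂ θ η) + (∫ θ in s..η, C₂ s θ * R₂ θ η)
              + ∫ θ in η..b, C₂ s θ * R₁ θ η)
            y s := by
  exact threePI_comp_aux hab C₀ C₁ C₂ R₀ R₁ R₂ hC₀ hC₁ hC₂ hR₀ hR₁ hR₂ y hy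
end

section
/- Let a < b and let N₀ : [a,b] → ℝ^{n×m}, N₁, N₂ : [a,b]² → ℝ^{n×m} be continuous matrix-valued functions. Then for all y ∈ L²([a,b], ℝ^m) and g ∈ L²([a,b], ℝ^n), ⟨P_{N₀,N₁,N₂} y, g⟩_{L²} = ⟨y, P_{N̂₀,N̂₁,N̂₂} g⟩_{L²}, where N̂₀(s) = N₀(s)ᵀ, N̂₁(s,θ) = N₂(θ,s)ᵀ and N̂₂(s,θ) = N₁(θ,s)ᵀ. That is, the adjoint of a 3-PI operator with respect to the L² inner product is the 3-PI operator with these transposed and reflected parameters. -/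
open MeasureTheory Set Matrix
open scoped RealInnerProductSpace

/-! ### Auxiliary lemmas -/

instance matrixPseudoMetrizable {k l : ℕ} :
    TopologicalSpace.PseudoMetrizableSpace (Matrix (Fin k) (Fin l) ℝ) :=
  inferInstanceAs (TopologicalSpace.PseudoMetrizableSpace (Fin k → Fin l → ℝ))

lemma continuous_mulVecE {n m : ℕ} :
    Continuous (fun p : Matrix (Fin n) (Fin m) ℝ × EuclideanSpace ℝ (Fin m) =>
      mulVecE p.1 p.2) := by
  simp only [mulVecE]
  exact (PiLp.continuous_toLp 2 _).comp
    (continuous_fst.matrix_mulVec ((PiLp.continuous_ofLp 2 _).comp continuous_snd))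

lemma inner_mulVecE {n m : ℕ} (A : Matrix (Fin n) (Fin m) ℝ)
    (v : EuclideanSpace ℝ (Fin m)) (w : EuclideanSpace ℝ (Fin n)) :
    ⟪mulVecE A v, w⟫ = ⟪v, mulVecE Aᵀ w⟫ := by
  simp only [mulVecE, PiLp.inner_apply, RCLike.inner_apply, conj_trivial, PiLp.toLp_apply, Matrix.mulVec,
    dotProduct, Matrix.transpose_apply, Finset.sum_mul, Finset.mul_sum]
  rw [Finset.sum_comm]
  congr 1; ext i; congr 1; ext j; ring

lemma euclid_norm_le_sum {n : ℕ} (u : EuclideanSpace ℝ (Fin n)) : ‖u‖ ≤ ∑ i, |u i| := by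
  rw [EuclideanSpace.norm_eq]
  have h : ∑ i, ‖u i‖^2 ≤ (∑ i, |u i|)^2 := by
    have := Finset.sum_sq_le_sq_sum_of_nonneg (s := Finset.univ)
      (f := fun i : Fin n => |u i|) (fun i _ => abs_nonneg _)
    simpa using this
  calc Real.sqrt (∑ i, ‖u i‖^2) ≤ Real.sqrt ((∑ i, |u i|)^2) := Real.sqrt_le_sqrt h
    _ = ∑ i, |u i| := Real.sqrt_sq (Finset.sum_nonneg fun i _ => abs_nonneg _)

lemma euclid_abs_le_norm {n : ℕ} (u : EuclideanSpace ℝ (Fin n)) (i : Fin n) : |u i| ≤ ‖u‖ := by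
  rw [EuclideanSpace.norm_eq]
  rw [show |u i| = Real.sqrt (‖u i‖^2) by rw [Real.sqrt_sq_eq_abs]; simp]
  exact Real.sqrt_le_sqrt (Finset.single_le_sum (f := fun j => ‖u j‖^2)
    (fun j _ => sq_nonneg _) (Finset.mem_univ i))

lemma norm_mulVecE_le {n m : ℕ} (A : Matrix (Fin n) (Fin m) ℝ) (v : EuclideanSpace ℝ (Fin m)) :
    ‖mulVecE A v‖ ≤ (∑ i, ∑ j, |A i j|) * ‖v‖ := by
  calc ‖mulVecE A v‖ ≤ ∑ i, |mulVecE A v i| := euclid_norm_le_sum _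
    _ ≤ ∑ i, ∑ j, |A i j| * ‖v‖ := by
        apply Finset.sum_le_sum
        intro i _
        calc |mulVecE A v i| = |∑ j, A i j * v j| := by
              simp [mulVecE, Matrix.mulVec, dotProduct]
          _ ≤ ∑ j, |A i j * v j| := Finset.abs_sum_le_sum_abs _ _
          _ ≤ ∑ j, |A i j| * ‖v‖ := by
              apply Finset.sum_le_sum
              intro j _
              rw [abs_mul]
              exact mul_le_mul_of_nonneg_left (euclid_abs_le_norm v j) (abs_nonneg _)
    _ = (∑ i, ∑ j, |A i j|) * ‖v‖ := by
        rw [Finset.sum_mul]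
        exact Finset.sum_congr rfl fun i _ => (Finset.sum_mul _ _ _).symm

lemma sec_integrable {a b : ℝ} {k l : ℕ} (M : ℝ → Matrix (Fin k) (Fin l) ℝ)
    (hM : ContinuousOn M (Icc a b)) (y : ℝ → EuclideanSpace ℝ (Fin l))
    (hy : Integrable y (volume.restrict (Icc a b))) {c d : ℝ} (h : Ioc c d ⊆ Icc a b) :
    Integrable (fun θ => mulVecE (M θ) (y θ)) (volume.restrict (Ioc c d)) := by
  have hmono : volume.restrict (Ioc c d) ≤ volume.restrict (Icc a b) :=
    Measure.restrict_mono h le_rfl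
  have hyae : AEStronglyMeasurable y (volume.restrict (Ioc c d)) :=
    hy.aestronglyMeasurable.mono_measure hmono
  have hMae : AEStronglyMeasurable M (volume.restrict (Ioc c d)) :=
    (hM.aestronglyMeasurable measurableSet_Icc).mono_measure hmono
  have haesm : AEStronglyMeasurable (fun θ => mulVecE (M θ) (y θ)) (volume.restrict (Ioc c d)) :=
    continuous_mulVecE.comp_aestronglyMeasurable (hMae.prodMk hyae)
  obtain ⟨C, hC⟩ := (isCompact_Icc (a := a) (b := b)).exists_bound_of_continuousOn
    (f := fun θ => ∑ i, ∑ j, |M θ i j|) (by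
      apply continuousOn_finset_sum; intro i _; apply continuousOn_finset_sum; intro j _
      exact (((continuous_apply j).comp (continuous_apply i)).comp_continuousOn hM).abs)
  refine Integrable.mono' ((hy.norm.mono_measure hmono).const_mul C) haesm ?_
  filter_upwards [ae_restrict_mem measurableSet_Ioc] with θ hθ
  calc ‖mulVecE (M θ) (y θ)‖ ≤ (∑ i, ∑ j, |M θ i j|) * ‖y θ‖ := norm_mulVecE_le _ _
    _ ≤ C * ‖y θ‖ := by
        apply mul_le_mul_of_nonneg_right _ (norm_nonneg _)
        have := hC θ (h hθ)
        rwa [Real.norm_eq_abs, abs_of_nonneg (by positivity)] at this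

lemma key_integrable {a b : ℝ} {n m : ℕ}
    (N : ℝ → ℝ → Matrix (Fin n) (Fin m) ℝ)
    (hN : ContinuousOn (fun z : ℝ × ℝ => N z.1 z.2) (Icc a b ×ˢ Icc a b))
    (y : ℝ → EuclideanSpace ℝ (Fin m)) (g : ℝ → EuclideanSpace ℝ (Fin n))
    (hy : Integrable y (volume.restrict (Icc a b)))
    (hg : Integrable g (volume.restrict (Icc a b))) :
    Integrable (fun z : ℝ × ℝ => ⟪mulVecE (N z.1 z.2) (y z.2), g z.1⟫)
      ((volume.restrict (Ioc a b)).prod (volume.restrict (Ioc a b))) := by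
  have hprodeq : (volume.restrict (Ioc a b)).prod (volume.restrict (Ioc a b))
      = (volume.prod volume).restrict (Ioc a b ×ˢ Ioc a b) := Measure.prod_restrict _ _
  have hsub : (Ioc a b ×ˢ Ioc a b : Set (ℝ × ℝ)) ⊆ Icc a b ×ˢ Icc a b :=
    Set.prod_mono Ioc_subset_Icc_self Ioc_subset_Icc_self
  have hmono : (volume.restrict (Ioc a b)).prod (volume.restrict (Ioc a b))
      ≤ (volume.prod volume).restrict (Icc a b ×ˢ Icc a b) := by
    rw [hprodeq]; exact Measure.restrict_mono hsub le_rfl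
  have hmono1 : volume.restrict (Ioc a b) ≤ volume.restrict (Icc a b) :=
    Measure.restrict_mono Ioc_subset_Icc_self le_rfl
  have hNae : AEStronglyMeasurable (fun z : ℝ × ℝ => N z.1 z.2)
      ((volume.restrict (Ioc a b)).prod (volume.restrict (Ioc a b))) :=
    (hN.aestronglyMeasurable (measurableSet_Icc.prod measurableSet_Icc)).mono_measure hmono
  have hyae : AEStronglyMeasurable (fun z : ℝ × ℝ => y z.2)
      ((volume.restrict (Ioc a b)).prod (volume.restrict (Ioc a b))) :=
    (hy.aestronglyMeasurable.mono_measure hmono1).comp_snd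
  have hgae : AEStronglyMeasurable (fun z : ℝ × ℝ => g z.1)
      ((volume.restrict (Ioc a b)).prod (volume.restrict (Ioc a b))) :=
    (hg.aestronglyMeasurable.mono_measure hmono1).comp_fst
  have haesm : AEStronglyMeasurable (fun z : ℝ × ℝ => ⟪mulVecE (N z.1 z.2) (y z.2), g z.1⟫)
      ((volume.restrict (Ioc a b)).prod (volume.restrict (Ioc a b))) :=
    (continuous_mulVecE.comp_aestronglyMeasurable (hNae.prodMk hyae)).inner hgae
  obtain ⟨C, hC⟩ :=
    ((isCompact_Icc (a := a) (b := b)).prod isCompact_Icc).exists_bound_of_continuousOn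
      (f := fun z : ℝ × ℝ => ∑ i, ∑ j, |N z.1 z.2 i j|) (by
        apply continuousOn_finset_sum; intro i _; apply continuousOn_finset_sum; intro j _
        exact (((continuous_apply j).comp (continuous_apply i)).comp_continuousOn hN).abs)
  have hdom : Integrable (fun z : ℝ × ℝ => C * (‖g z.1‖ * ‖y z.2‖))
      ((volume.restrict (Ioc a b)).prod (volume.restrict (Ioc a b))) :=
    (((hg.norm.mono_measure hmono1)).mul_prod ((hy.norm.mono_measure hmono1))).const_mul C
  refine hdom.mono' haesm ?_
  have hae : ∀ᵐ z : ℝ × ℝ ∂((volume.restrict (Ioc a b)).prod (volume.restrict (Ioc a b))),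
      z ∈ Ioc a b ×ˢ Ioc a b := by
    rw [hprodeq]
    exact ae_restrict_mem (measurableSet_Ioc.prod measurableSet_Ioc)
  filter_upwards [hae] with z hz
  have hzK := hsub hz
  calc ‖⟪mulVecE (N z.1 z.2) (y z.2), g z.1⟫‖
      ≤ ‖mulVecE (N z.1 z.2) (y z.2)‖ * ‖g z.1‖ := norm_inner_le_norm _ _
    _ ≤ ((∑ i, ∑ j, |N z.1 z.2 i j|) * ‖y z.2‖) * ‖g z.1‖ :=
        mul_le_mul_of_nonneg_right (norm_mulVecE_le _ _) (norm_nonneg _)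
    _ ≤ (C * ‖y z.2‖) * ‖g z.1‖ := by
        apply mul_le_mul_of_nonneg_right _ (norm_nonneg _)
        apply mul_le_mul_of_nonneg_right _ (norm_nonneg _)
        have := hC z hzK
        rwa [Real.norm_eq_abs, abs_of_nonneg (by positivity)] at this
    _ = C * (‖g z.1‖ * ‖y z.2‖) := by ring

lemma f0_integrable {a b : ℝ} {n m : ℕ}
    (N : ℝ → Matrix (Fin n) (Fin m) ℝ) (hN : ContinuousOn N (Icc a b))
    (y : ℝ → EuclideanSpace ℝ (Fin m)) (g : ℝ → EuclideanSpace ℝ (Fin n))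
    (hy : MemLp y 2 (volume.restrict (Icc a b)))
    (hg : MemLp g 2 (volume.restrict (Icc a b))) :
    Integrable (fun s => ⟪mulVecE (N s) (y s), g s⟫) (volume.restrict (Ioc a b)) := by
  have hmono1 : volume.restrict (Ioc a b) ≤ volume.restrict (Icc a b) :=
    Measure.restrict_mono Ioc_subset_Icc_self le_rfl
  have hNae : AEStronglyMeasurable N (volume.restrict (Ioc a b)) :=
    (hN.aestronglyMeasurable measurableSet_Icc).mono_measure hmono1
  have hyae : AEStronglyMeasurable y (volume.restrict (Ioc a b)) :=
    hy.aestronglyMeasurable.mono_measure hmono1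
  have hgae : AEStronglyMeasurable g (volume.restrict (Ioc a b)) :=
    hg.aestronglyMeasurable.mono_measure hmono1
  have haesm : AEStronglyMeasurable (fun s => ⟪mulVecE (N s) (y s), g s⟫)
      (volume.restrict (Ioc a b)) :=
    (continuous_mulVecE.comp_aestronglyMeasurable (hNae.prodMk hyae)).inner hgae
  obtain ⟨C, hC⟩ := (isCompact_Icc (a := a) (b := b)).exists_bound_of_continuousOn
    (f := fun θ => ∑ i, ∑ j, |N θ i j|) (by
      apply continuousOn_finset_sum; intro i _; apply continuousOn_finset_sum; intro j _
      exact (((continuous_apply j).comp (continuous_apply i)).comp_continuousOn hN).abs)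
  have hprod : Integrable (fun s => ‖y s‖ * ‖g s‖) (volume.restrict (Icc a b)) := by
    have hpqr : (1 : ENNReal)/1 = 1/2 + 1/2 := by
      rw [ENNReal.div_add_div_same]
      norm_num
      exact (ENNReal.div_self (by norm_num) (by norm_num)).symm
    have h := hg.norm.smul (r := 1) hy.norm
    rw [memLp_one_iff_integrable] at h
    exact h.congr (Filter.Eventually.of_forall fun s => by simp [smul_eq_mul])
  refine Integrable.mono' (((hprod.mono_measure hmono1)).const_mul C) haesm ?_
  filter_upwards [ae_restrict_mem measurableSet_Ioc] with s hs
  have hsK : s ∈ Icc a b := Ioc_subset_Icc_self hs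
  calc ‖⟪mulVecE (N s) (y s), g s⟫‖
      ≤ ‖mulVecE (N s) (y s)‖ * ‖g s‖ := norm_inner_le_norm _ _
    _ ≤ ((∑ i, ∑ j, |N s i j|) * ‖y s‖) * ‖g s‖ :=
        mul_le_mul_of_nonneg_right (norm_mulVecE_le _ _) (norm_nonneg _)
    _ ≤ (C * ‖y s‖) * ‖g s‖ := by
        apply mul_le_mul_of_nonneg_right _ (norm_nonneg _)
        apply mul_le_mul_of_nonneg_right _ (norm_nonneg _)
        have := hC s hsK
        rwa [Real.norm_eq_abs, abs_of_nonneg (by positivity)] at this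
    _ = C * (‖y s‖ * ‖g s‖) := by ring

/-- Restricting the indicator integral to the lower triangle. -/
lemma intA {a b s : ℝ} (hs : s ∈ Ioc a b) (H : ℝ → ℝ) :
    ∫ θ in Ioc a b, (if θ ≤ s then H θ else 0) = ∫ θ in Ioc a s, H θ := by
  have : (fun θ => if θ ≤ s then H θ else 0) = Set.indicator (Iic s) H := by
    ext θ; simp [Set.indicator_apply]
  rw [this, setIntegral_indicator measurableSet_Iic, Set.Ioc_inter_Iic, min_eq_right hs.2]

lemma intB {a b s : ℝ} (hs : s ∈ Ioc a b) (H : ℝ → ℝ) :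
    ∫ θ in Ioc a b, (if s ≤ θ then H θ else 0) = ∫ θ in Ioc s b, H θ := by
  have : (fun θ => if s ≤ θ then H θ else 0) = Set.indicator (Ici s) H := by
    ext θ; simp [Set.indicator_apply]
  rw [this, setIntegral_indicator measurableSet_Ici]
  have hset : Ioc a b ∩ Ici s = Icc s b := by
    ext θ
    constructor
    · rintro ⟨⟨_, h2⟩, h3⟩; exact ⟨h3, h2⟩
    · rintro ⟨h1, h2⟩; exact ⟨⟨lt_of_lt_of_le hs.1 h1, h2⟩, h1⟩
  rw [hset, integral_Icc_eq_integral_Ioc]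

/-- The adjoint of a 3-PI operator. -/
theorem threePI_adjoint {n m : ℕ} {a b : ℝ} (hab : a < b)
    (N₀ : ℝ → Matrix (Fin n) (Fin m) ℝ)
    (N₁ N₂ : ℝ → ℝ → Matrix (Fin n) (Fin m) ℝ)
    (hN₀ : ContinuousOn N₀ (Icc a b))
    (hN₁ : ContinuousOn (fun z : ℝ × ℝ => N₁ z.1 z.2) (Icc a b ×ˢ Icc a b))
    (hN₂ : ContinuousOn (fun z : ℝ × ℝ => N₂ z.1 z.2) (Icc a b ×ˢ Icc a b))
    (y : ℝ → EuclideanSpace ℝ (Fin m)) (g : ℝ → EuclideanSpace ℝ (Fin n))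
    (hy : MemLp y 2 (volume.restrict (Icc a b)))
    (hg : MemLp g 2 (volume.restrict (Icc a b))) :
    ∫ s in a..b, ⟪threePI a b N₀ N₁ N₂ y s, g s⟫
      = ∫ s in a..b, ⟪y s, threePI a b (fun s => (N₀ s)ᵀ)
          (fun s θ => (N₂ θ s)ᵀ) (fun s θ => (N₁ θ s)ᵀ) g s⟫ := by
  haveI : IsFiniteMeasure (volume.restrict (Icc a b)) :=
    ⟨by rw [Measure.restrict_apply_univ, Real.volume_Icc]; exact ENNReal.ofReal_lt_top⟩
  have hyI : Integrable y (volume.restrict (Icc a b)) := hy.integrable (by norm_num)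
  have hgI : Integrable g (volume.restrict (Icc a b)) := hg.integrable (by norm_num)
  -- the two triangle kernels
  set F₁ : ℝ → ℝ → ℝ := fun s θ => ⟪mulVecE (N₁ s θ) (y θ), g s⟫ with hF₁def
  set F₂ : ℝ → ℝ → ℝ := fun s θ => ⟪mulVecE (N₂ s θ) (y θ), g s⟫ with hF₂def
  have hF₁int : Integrable (fun z : ℝ × ℝ => F₁ z.1 z.2)
      ((volume.restrict (Ioc a b)).prod (volume.restrict (Ioc a b))) :=
    key_integrable N₁ hN₁ y g hyI hgI
  have hF₂int : Integrable (fun z : ℝ × ℝ => F₂ z.1 z.2)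
      ((volume.restrict (Ioc a b)).prod (volume.restrict (Ioc a b))) :=
    key_integrable N₂ hN₂ y g hyI hgI
  have hG₁int : Integrable (fun z : ℝ × ℝ => if z.2 ≤ z.1 then F₁ z.1 z.2 else 0)
      ((volume.restrict (Ioc a b)).prod (volume.restrict (Ioc a b))) := by
    have hmeas : MeasurableSet {z : ℝ × ℝ | z.2 ≤ z.1} :=
      measurableSet_le measurable_snd measurable_fst
    have heq : (fun z : ℝ × ℝ => if z.2 ≤ z.1 then F₁ z.1 z.2 else 0)
        = Set.indicator {z : ℝ × ℝ | z.2 ≤ z.1} (fun z => F₁ z.1 z.2) := by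
      ext z; simp [Set.indicator_apply]
    rw [heq]; exact hF₁int.indicator hmeas
  have hG₂int : Integrable (fun z : ℝ × ℝ => if z.1 ≤ z.2 then F₂ z.1 z.2 else 0)
      ((volume.restrict (Ioc a b)).prod (volume.restrict (Ioc a b))) := by
    have hmeas : MeasurableSet {z : ℝ × ℝ | z.1 ≤ z.2} :=
      measurableSet_le measurable_fst measurable_snd
    have heq : (fun z : ℝ × ℝ => if z.1 ≤ z.2 then F₂ z.1 z.2 else 0)
        = Set.indicator {z : ℝ × ℝ | z.1 ≤ z.2} (fun z => F₂ z.1 z.2) := by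
      ext z; simp [Set.indicator_apply]
    rw [heq]; exact hF₂int.indicator hmeas
  -- pointwise expansion of the left-hand side
  have hL : Set.EqOn (fun s => ⟪threePI a b N₀ N₁ N₂ y s, g s⟫)
      (fun s => ⟪mulVecE (N₀ s) (y s), g s⟫
        + (∫ θ in Ioc a b, if θ ≤ s then F₁ s θ else 0)
        + (∫ θ in Ioc a b, if s ≤ θ then F₂ s θ else 0)) (Ioc a b) := by
    intro s hs
    have hsK : s ∈ Icc a b := Ioc_subset_Icc_self hs
    have hIocas : Ioc a s ⊆ Icc a b := fun θ hθ => ⟨hθ.1.le, hθ.2.trans hs.2⟩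
    have hIocsb : Ioc s b ⊆ Icc a b := fun θ hθ => ⟨hs.1.le.trans hθ.1.le, hθ.2⟩
    have hM1 : ContinuousOn (fun θ => N₁ s θ) (Icc a b) :=
      hN₁.comp (continuous_const.prodMk continuous_id).continuousOn (fun θ hθ => ⟨hsK, hθ⟩)
    have hM2 : ContinuousOn (fun θ => N₂ s θ) (Icc a b) :=
      hN₂.comp (continuous_const.prodMk continuous_id).continuousOn (fun θ hθ => ⟨hsK, hθ⟩)
    have hv1 : Integrable (fun θ => mulVecE (N₁ s θ) (y θ)) (volume.restrict (Ioc a s)) :=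
      sec_integrable _ hM1 y hyI hIocas
    have hv2 : Integrable (fun θ => mulVecE (N₂ s θ) (y θ)) (volume.restrict (Ioc s b)) :=
      sec_integrable _ hM2 y hyI hIocsb
    have e₁ : ⟪(∫ θ in Ioc a s, mulVecE (N₁ s θ) (y θ)), g s⟫
        = ∫ θ in Ioc a s, F₁ s θ := calc
      ⟪(∫ θ in Ioc a s, mulVecE (N₁ s θ) (y θ)), g s⟫
          = ⟪g s, (∫ θ in Ioc a s, mulVecE (N₁ s θ) (y θ))⟫ := real_inner_comm _ _
      _ = ∫ θ in Ioc a s, ⟪g s, mulVecE (N₁ s θ) (y θ)⟫ := (integral_inner hv1 (g s)).symm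
      _ = ∫ θ in Ioc a s, F₁ s θ :=
          setIntegral_congr_fun measurableSet_Ioc fun θ _ => real_inner_comm _ _
    have e₂ : ⟪(∫ θ in Ioc s b, mulVecE (N₂ s θ) (y θ)), g s⟫
        = ∫ θ in Ioc s b, F₂ s θ := calc
      ⟪(∫ θ in Ioc s b, mulVecE (N₂ s θ) (y θ)), g s⟫
          = ⟪g s, (∫ θ in Ioc s b, mulVecE (N₂ s θ) (y θ))⟫ := real_inner_comm _ _
      _ = ∫ θ in Ioc s b, ⟪g s, mulVecE (N₂ s θ) (y θ)⟫ := (integral_inner hv2 (g s)).symm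
      _ = ∫ θ in Ioc s b, F₂ s θ :=
          setIntegral_congr_fun measurableSet_Ioc fun θ _ => real_inner_comm _ _
    simp only [threePI]
    rw [inner_add_left, inner_add_left, intA hs, intB hs,
      intervalIntegral.integral_of_le hs.1.le, intervalIntegral.integral_of_le hs.2,
      e₁, e₂]
  -- pointwise expansion of the right-hand side
  have hR : Set.EqOn (fun s => ⟪y s, threePI a b (fun s => (N₀ s)ᵀ)
        (fun s θ => (N₂ θ s)ᵀ) (fun s θ => (N₁ θ s)ᵀ) g s⟫)
      (fun s => ⟪mulVecE (N₀ s) (y s), g s⟫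
        + (∫ θ in Ioc a b, if θ ≤ s then F₂ θ s else 0)
        + (∫ θ in Ioc a b, if s ≤ θ then F₁ θ s else 0)) (Ioc a b) := by
    intro s hs
    have hsK : s ∈ Icc a b := Ioc_subset_Icc_self hs
    have hIocas : Ioc a s ⊆ Icc a b := fun θ hθ => ⟨hθ.1.le, hθ.2.trans hs.2⟩
    have hIocsb : Ioc s b ⊆ Icc a b := fun θ hθ => ⟨hs.1.le.trans hθ.1.le, hθ.2⟩
    have htr : Continuous (fun A : Matrix (Fin n) (Fin m) ℝ => Aᵀ) :=
      continuous_id.matrix_transpose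
    have hM2t : ContinuousOn (fun θ => (N₂ θ s)ᵀ) (Icc a b) :=
      htr.comp_continuousOn
        (hN₂.comp (continuous_id.prodMk continuous_const).continuousOn (fun θ hθ => ⟨hθ, hsK⟩))
    have hM1t : ContinuousOn (fun θ => (N₁ θ s)ᵀ) (Icc a b) :=
      htr.comp_continuousOn
        (hN₁.comp (continuous_id.prodMk continuous_const).continuousOn (fun θ hθ => ⟨hθ, hsK⟩))
    have hw1 : Integrable (fun θ => mulVecE (N₂ θ s)ᵀ (g θ)) (volume.restrict (Ioc a s)) :=
      sec_integrable _ hM2t g hgI hIocas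
    have hw2 : Integrable (fun θ => mulVecE (N₁ θ s)ᵀ (g θ)) (volume.restrict (Ioc s b)) :=
      sec_integrable _ hM1t g hgI hIocsb
    have e₁ : ⟪y s, (∫ θ in Ioc a s, mulVecE (N₂ θ s)ᵀ (g θ))⟫
        = ∫ θ in Ioc a s, F₂ θ s := calc
      ⟪y s, (∫ θ in Ioc a s, mulVecE (N₂ θ s)ᵀ (g θ))⟫
          = ∫ θ in Ioc a s, ⟪y s, mulVecE (N₂ θ s)ᵀ (g θ)⟫ := (integral_inner hw1 (y s)).symm
      _ = ∫ θ in Ioc a s, F₂ θ s :=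
          setIntegral_congr_fun measurableSet_Ioc fun θ _ => (inner_mulVecE _ _ _).symm
    have e₂ : ⟪y s, (∫ θ in Ioc s b, mulVecE (N₁ θ s)ᵀ (g θ))⟫
        = ∫ θ in Ioc s b, F₁ θ s := calc
      ⟪y s, (∫ θ in Ioc s b, mulVecE (N₁ θ s)ᵀ (g θ))⟫
          = ∫ θ in Ioc s b, ⟪y s, mulVecE (N₁ θ s)ᵀ (g θ)⟫ := (integral_inner hw2 (y s)).symm
      _ = ∫ θ in Ioc s b, F₁ θ s :=
          setIntegral_congr_fun measurableSet_Ioc fun θ _ => (inner_mulVecE _ _ _).symm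
    simp only [threePI]
    rw [inner_add_right, inner_add_right, intA hs, intB hs,
      intervalIntegral.integral_of_le hs.1.le, intervalIntegral.integral_of_le hs.2,
      e₁, e₂, ← inner_mulVecE (N₀ s) (y s) (g s)]
  -- integrability of the pieces as functions of `s`
  have hf0 : Integrable (fun s => ⟪mulVecE (N₀ s) (y s), g s⟫) (volume.restrict (Ioc a b)) :=
    f0_integrable N₀ hN₀ y g hy hg
  have hA₁ : Integrable (fun s => ∫ θ in Ioc a b, if θ ≤ s then F₁ s θ else 0)
      (volume.restrict (Ioc a b)) := hG₁int.integral_prod_left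
  have hA₂ : Integrable (fun s => ∫ θ in Ioc a b, if s ≤ θ then F₂ s θ else 0)
      (volume.restrict (Ioc a b)) := hG₂int.integral_prod_left
  have hB₂ : Integrable (fun s => ∫ θ in Ioc a b, if θ ≤ s then F₂ θ s else 0)
      (volume.restrict (Ioc a b)) := hG₂int.integral_prod_right
  have hB₁ : Integrable (fun s => ∫ θ in Ioc a b, if s ≤ θ then F₁ θ s else 0)
      (volume.restrict (Ioc a b)) := hG₁int.integral_prod_right
  have hsumL : Integrable (fun s => ⟪mulVecE (N₀ s) (y s), g s⟫
      + ∫ θ in Ioc a b, if θ ≤ s then F₁ s θ else 0) (volume.restrict (Ioc a b)) :=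
    hf0.add hA₁
  have hsumR : Integrable (fun s => ⟪mulVecE (N₀ s) (y s), g s⟫
      + ∫ θ in Ioc a b, if θ ≤ s then F₂ θ s else 0) (volume.restrict (Ioc a b)) :=
    hf0.add hB₂
  rw [intervalIntegral.integral_of_le hab.le, intervalIntegral.integral_of_le hab.le,
    setIntegral_congr_fun measurableSet_Ioc hL, setIntegral_congr_fun measurableSet_Ioc hR,
    integral_add hsumL hA₂, integral_add hf0 hA₁,
    integral_add hsumR hB₁, integral_add hf0 hB₂]
  have swap₁ : (∫ s in Ioc a b, ∫ θ in Ioc a b, if θ ≤ s then F₁ s θ else 0)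
      = ∫ s in Ioc a b, ∫ θ in Ioc a b, if s ≤ θ then F₁ θ s else 0 := by
    exact integral_integral_swap (f := fun x θ => if θ ≤ x then F₁ x θ else 0) (by exact hG₁int)
  have swap₂ : (∫ s in Ioc a b, ∫ θ in Ioc a b, if s ≤ θ then F₂ s θ else 0)
      = ∫ s in Ioc a b, ∫ θ in Ioc a b, if θ ≤ s then F₂ θ s else 0 := by
    exact integral_integral_swap (f := fun x θ => if x ≤ θ then F₂ x θ else 0) (by exact hG₂int)
  rw [swap₁, swap₂]
  ring
end
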